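/- arXiv:2205.04922 — 6 statements merged into one kernel-verified Lean document; each statement's English description precedes it below -/
import Mathlib

section
/- Let d ≥ 2, let σ denote the surface measure on the unit sphere S^{d−1} ⊂ ℝ^d, and for λ ∈ ℂ with Re λ > 0 and j ∈ {1,…,d} set γ_j(λ) = ∫_{S^{d−1}} p₁² p_j² / (λ + i p₁) dσ(p). Then for every ψ̄ ≥ 0 one has |1 + d ψ̄ γ_j(λ)| ≥ 1 for all λ with Re λ > 0. In particular, in the puller case (ι = +1) the Penrose condition 1 + ι d ψ̄ γ_j(λ) ≠ 0 holds for every concentration ψ̄ ≥ 0, with a uniform lower bound independent of ψ̄. -/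
open MeasureTheory Metric

/-- With `γ_j(λ) = ∫_{S^{d-1}} p₁² p_j² / (λ + i p₁) dσ(p)` for
`Re λ > 0`, one has `|1 + d ψ̄ γ_j(λ)| ≥ 1` for every concentration `ψ̄ ≥ 0`; in
particular, in the puller case the Penrose symbol `1 + d ψ̄ γ_j(λ)` never vanishes
on the open right half-plane, with a lower bound uniform in `ψ̄`. -/
theorem statement1 (d : ℕ) (hd : 2 ≤ d) (l : ℂ) (hl : 0 < l.re) (j : Fin d)
    (ψ : ℝ) (hψ : 0 ≤ ψ) :
    letI E := EuclideanSpace ℝ (Fin d)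
    letI σ : Measure (sphere (0 : E) 1) := (volume : Measure E).toSphere
    letI i0 : Fin d := ⟨0, by omega⟩
    letI γ : ℂ := ∫ p : sphere (0 : E) 1,
      ((((p : E) i0) ^ 2 * ((p : E) j) ^ 2 : ℝ) : ℂ) / (l + Complex.I * ((p : E) i0)) ∂σ
    1 ≤ ‖1 + (d : ℂ) * (ψ : ℂ) * γ‖ ∧ 1 + (d : ℂ) * (ψ : ℂ) * γ ≠ 0 := by
  set E := EuclideanSpace ℝ (Fin d)
  set σ : Measure (sphere (0 : E) 1) := (volume : Measure E).toSphere
  set i0 : Fin d := ⟨0, by omega⟩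
  -- pointwise real part nonneg
  set f : sphere (0 : E) 1 → ℂ := fun p =>
    ((((p : E) i0) ^ 2 * ((p : E) j) ^ 2 : ℝ) : ℂ) / (l + Complex.I * ((p : E) i0)) with hf
  set γ : ℂ := ∫ p : sphere (0 : E) 1, f p ∂σ with hγ
  have hptre : ∀ p : sphere (0 : E) 1, 0 ≤ (f p).re := by
    intro p
    have hw : (l + Complex.I * ((p : E) i0 : ℝ)).re = l.re := by simp
    rw [hf]
    simp only [div_eq_mul_inv, Complex.re_ofReal_mul]
    apply mul_nonneg (by positivity)
    rw [Complex.inv_re, hw]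
    exact div_nonneg hl.le (Complex.normSq_nonneg _)
  have hγre : 0 ≤ γ.re := by
    by_cases hint : Integrable f σ
    · have := integral_re (μ := σ) hint
      have h2 : γ.re = ∫ p, (f p).re ∂σ := this.symm
      rw [h2]
      exact integral_nonneg hptre
    · have : γ = 0 := integral_undef hint
      rw [this]; norm_num
  have hre : 1 ≤ (1 + (d : ℂ) * (ψ : ℂ) * γ).re := by
    have : (1 + (d : ℂ) * (ψ : ℂ) * γ).re = 1 + (d : ℝ) * ψ * γ.re := by
      simp [Complex.add_re, Complex.mul_re]
    rw [this]
    nlinarith [mul_nonneg (mul_nonneg (Nat.cast_nonneg (α := ℝ) d) hψ) hγre]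
  have habs : 1 ≤ ‖1 + (d : ℂ) * (ψ : ℂ) * γ‖ :=
    le_trans hre (Complex.re_le_norm _)
  refine ⟨habs, fun h => ?_⟩
  rw [h] at habs
  norm_num at habs
end

section
/- There exists a constant C > 0 such that for every t ∈ ℝ, |∫_{−1}^{1} s² (1 − s²) e^{−i s t} ds| ≤ C (1 + |t|)^{−2}. -/
open intervalIntegral

lemma abs4 (a b c d : ℂ) : ‖a + b + c + d‖ ≤
    ‖a‖ + ‖b‖ + ‖c‖ + ‖d‖ := by
  have h1 := norm_add_le (a + b + c) d
  have h2 := norm_add_le (a + b) c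
  have h3 := norm_add_le a b
  linarith

lemma aux (α : ℂ) (hα0 : α ≠ 0) :
    (∫ s in (-1 : ℝ)..1,
        ((s ^ 2 * (1 - s ^ 2) : ℝ) : ℂ) * Complex.exp (α * s)) =
      Complex.exp α * (2/α^2 - 10/α^3 + 24/α^4 - 24/α^5)
      - Complex.exp (-α) * (-2/α^2 - 10/α^3 - 24/α^4 - 24/α^5) := by
  set a0 : ℂ := 2/α^3 - 24/α^5 with ha0
  set a1 : ℂ := -2/α^2 + 24/α^4 with ha1
  set a2 : ℂ := 1/α - 12/α^3 with ha2
  set a3 : ℂ := 4/α^2 with ha3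
  set a4 : ℂ := -1/α with ha4
  have hderiv : ∀ s : ℝ, s ∈ Set.uIcc (-1:ℝ) 1 →
      HasDerivAt (fun s : ℝ =>
          Complex.exp (α * s) * (a0 + a1*(s:ℂ) + a2*(s:ℂ)^2 + a3*(s:ℂ)^3 + a4*(s:ℂ)^4))
        (((s ^ 2 * (1 - s ^ 2) : ℝ) : ℂ) * Complex.exp (α * s)) s := by
    intro s _
    have h1 : HasDerivAt (fun z : ℂ => Complex.exp (α * z))
        (Complex.exp (α * s) * (α * 1)) s := by
      have := (Complex.hasDerivAt_exp (α * (s:ℂ))).comp (s:ℂ)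
        ((hasDerivAt_id (s:ℂ)).const_mul α)
      exact this
    have h2 : HasDerivAt (fun z : ℂ => a0 + a1*z + a2*z^2 + a3*z^3 + a4*z^4)
        (a1 + 2*a2*s + 3*a3*(s:ℂ)^2 + 4*a4*(s:ℂ)^3) s := by
      have h := ((((hasDerivAt_const (s:ℂ) a0).add
          ((hasDerivAt_id (s:ℂ)).const_mul a1)).add
          ((hasDerivAt_pow 2 (s:ℂ)).const_mul a2)).add
          ((hasDerivAt_pow 3 (s:ℂ)).const_mul a3)).add
          ((hasDerivAt_pow 4 (s:ℂ)).const_mul a4)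
      simp only [id_eq] at h
      refine h.congr_deriv ?_
      norm_num
      ring
    have h3 := (h1.mul h2).comp_ofReal
    refine h3.congr_deriv ?_
    have hcoeff : ((s ^ 2 * (1 - s ^ 2) : ℝ) : ℂ) =
        (α * (a0 + a1*s + a2*(s:ℂ)^2 + a3*(s:ℂ)^3 + a4*(s:ℂ)^4)
          + (a1 + 2*a2*s + 3*a3*(s:ℂ)^2 + 4*a4*(s:ℂ)^3)) := by
      rw [ha0, ha1, ha2, ha3, ha4]
      push_cast
      linear_combination (-((2*α⁻¹^2-24*α⁻¹^4) + (-2*α⁻¹+24*α⁻¹^3)*(s:ℂ)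
        + (1-12*α⁻¹^2)*(s:ℂ)^2 + 4*α⁻¹*(s:ℂ)^3 - (s:ℂ)^4)) * (mul_inv_cancel₀ hα0)
    rw [hcoeff]; ring
  have hint : IntervalIntegrable
      (fun s : ℝ => ((s ^ 2 * (1 - s ^ 2) : ℝ) : ℂ) * Complex.exp (α * s))
      MeasureTheory.volume (-1) 1 := by
    apply Continuous.intervalIntegrable
    fun_prop
  rw [intervalIntegral.integral_eq_sub_of_hasDerivAt hderiv hint]
  push_cast
  rw [ha0, ha1, ha2, ha3, ha4]
  rw [show α * (-1:ℂ) = -α by ring, mul_one]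
  ring

lemma key (t : ℝ) (ht : t ≠ 0) :
    (∫ s in (-1 : ℝ)..1,
        ((s ^ 2 * (1 - s ^ 2) : ℝ) : ℂ) * Complex.exp (-Complex.I * s * t)) =
      Complex.exp (-Complex.I * t) *
        (2/(-Complex.I*t)^2 - 10/(-Complex.I*t)^3 + 24/(-Complex.I*t)^4 - 24/(-Complex.I*t)^5)
      - Complex.exp (Complex.I * t) *
        (-2/(-Complex.I*t)^2 - 10/(-Complex.I*t)^3 - 24/(-Complex.I*t)^4 - 24/(-Complex.I*t)^5) := by
  have hα0 : (-Complex.I * (t:ℂ)) ≠ 0 := by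
    simp [Complex.ext_iff, ht]
  have hcongr : (∫ s in (-1 : ℝ)..1,
        ((s ^ 2 * (1 - s ^ 2) : ℝ) : ℂ) * Complex.exp (-Complex.I * s * t)) =
      (∫ s in (-1 : ℝ)..1,
        ((s ^ 2 * (1 - s ^ 2) : ℝ) : ℂ) * Complex.exp ((-Complex.I * (t:ℂ)) * s)) := by
    apply intervalIntegral.integral_congr
    intro s _
    congr 1
    ring
  rw [hcongr, aux (-Complex.I * (t:ℂ)) hα0,
    show -(-Complex.I * (t:ℂ)) = Complex.I * t by ring]

/-- Improved stationary-phase decay of the one-dimensional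
oscillatory integral `∫_{-1}^{1} s²(1-s²) e^{-ist} ds`: it is bounded by
`C (1+|t|)^{-2}`. -/
theorem statement4 :
    ∃ C : ℝ, 0 < C ∧ ∀ t : ℝ,
      ‖(∫ s in (-1 : ℝ)..1,
          ((s ^ 2 * (1 - s ^ 2) : ℝ) : ℂ) * Complex.exp (-Complex.I * s * t))‖ ≤
        C * (1 + |t|) ^ (-2 : ℝ) := by
  refine ⟨480, by norm_num, fun t => ?_⟩
  have h1t : (0:ℝ) < 1 + |t| := by positivity
  have hpow : (1 + |t|) ^ (-2 : ℝ) = ((1 + |t|)^2)⁻¹ := by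
    rw [show (-2:ℝ) = -((2:ℕ):ℝ) by norm_num, Real.rpow_neg h1t.le, Real.rpow_natCast]
  rw [hpow, ← div_eq_mul_inv]
  by_cases ht : |t| ≤ 1
  · -- trivial bound
    have hb : ‖(∫ s in (-1 : ℝ)..1,
        ((s ^ 2 * (1 - s ^ 2) : ℝ) : ℂ) * Complex.exp (-Complex.I * s * t))‖ ≤ 1 * |1 - (-1:ℝ)| := by
      apply intervalIntegral.norm_integral_le_of_norm_le_const
      intro s hs
      rw [Set.uIoc_of_le (by norm_num : (-1:ℝ) ≤ 1)] at hs
      have hs1 : s^2 ≤ 1 := by nlinarith [hs.1, hs.2]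
      have hs0 : (0:ℝ) ≤ s^2 := sq_nonneg s
      have hexp : ‖Complex.exp (-Complex.I * s * t)‖ = 1 := by
        rw [Complex.norm_exp]
        norm_num [Complex.mul_re, Complex.mul_im]
      rw [norm_mul]
      calc ‖((s ^ 2 * (1 - s ^ 2) : ℝ) : ℂ)‖ * ‖Complex.exp (-Complex.I * s * t)‖
          = |s ^ 2 * (1 - s ^ 2)| := by
            rw [Complex.norm_real, hexp, mul_one, Real.norm_eq_abs]
        _ ≤ 1 := by
            rw [abs_mul, abs_of_nonneg hs0, abs_of_nonneg (by linarith)]; nlinarith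
    have h4 : (1 + |t|)^2 ≤ 4 := by nlinarith [abs_nonneg t]
    calc ‖_‖ ≤ 1 * |1 - (-1:ℝ)| := hb
      _ = 2 := by norm_num
      _ ≤ 480 / (1 + |t|)^2 := by
          rw [le_div_iff₀ (by positivity)]; nlinarith
  · push_neg at ht
    have ht0 : t ≠ 0 := by
      intro h; rw [h] at ht; norm_num at ht
    set T := |t| with hT
    have hT1 : (1:ℝ) ≤ T := ht.le
    have hT0 : (0:ℝ) < T := by linarith
    rw [key t ht0]
    have hαabs : ‖-Complex.I * (t:ℂ)‖ = T := by
      rw [norm_mul, norm_neg, Complex.norm_I, Complex.norm_real, Real.norm_eq_abs, one_mul]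
    have hexp1 : ‖Complex.exp (-Complex.I * t)‖ = 1 := by
      rw [Complex.norm_exp]; norm_num [Complex.mul_re, Complex.mul_im]
    have hexp2 : ‖Complex.exp (Complex.I * t)‖ = 1 := by
      rw [Complex.norm_exp]; norm_num [Complex.mul_re, Complex.mul_im]
    have hpows : T^2 ≤ T^3 ∧ T^2 ≤ T^4 ∧ T^2 ≤ T^5 :=
      ⟨pow_le_pow_right₀ hT1 (by norm_num), pow_le_pow_right₀ hT1 (by norm_num),
        pow_le_pow_right₀ hT1 (by norm_num)⟩
    have hQ : ∀ (b c d e : ℝ) , |b| + |c| + |d| + |e| ≤ 60 →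
        ‖(b:ℂ)/(-Complex.I * (t:ℂ))^2 + (c:ℂ)/(-Complex.I * (t:ℂ))^3
          + (d:ℂ)/(-Complex.I * (t:ℂ))^4 + (e:ℂ)/(-Complex.I * (t:ℂ))^5‖ ≤ 60/T^2 := by
      intro b c d e hsum
      have e2 : ‖(b:ℂ)/(-Complex.I * (t:ℂ))^2‖ = |b|/T^2 := by
        rw [norm_div, norm_pow, hαabs, Complex.norm_real, Real.norm_eq_abs]
      have e3 : ‖(c:ℂ)/(-Complex.I * (t:ℂ))^3‖ = |c|/T^3 := by
        rw [norm_div, norm_pow, hαabs, Complex.norm_real, Real.norm_eq_abs]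
      have e4 : ‖(d:ℂ)/(-Complex.I * (t:ℂ))^4‖ = |d|/T^4 := by
        rw [norm_div, norm_pow, hαabs, Complex.norm_real, Real.norm_eq_abs]
      have e5 : ‖(e:ℂ)/(-Complex.I * (t:ℂ))^5‖ = |e|/T^5 := by
        rw [norm_div, norm_pow, hαabs, Complex.norm_real, Real.norm_eq_abs]
      have h := abs4 ((b:ℂ)/(-Complex.I * (t:ℂ))^2) ((c:ℂ)/(-Complex.I * (t:ℂ))^3)
        ((d:ℂ)/(-Complex.I * (t:ℂ))^4) ((e:ℂ)/(-Complex.I * (t:ℂ))^5)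
      rw [e2, e3, e4, e5] at h
      have h3 : |c|/T^3 ≤ |c|/T^2 := by
        gcongr <;> first | exact hT1 | exact abs_nonneg _ | norm_num
      have h4 : |d|/T^4 ≤ |d|/T^2 := by
        gcongr <;> first | exact hT1 | exact abs_nonneg _ | norm_num
      have h5 : |e|/T^5 ≤ |e|/T^2 := by
        gcongr <;> first | exact hT1 | exact abs_nonneg _ | norm_num
      have hfin : |b|/T^2 + |c|/T^2 + |d|/T^2 + |e|/T^2 ≤ 60/T^2 := by
        rw [← add_div, ← add_div, ← add_div]
        gcongr
      linarith
    have hQ1 : ‖(2:ℂ)/(-Complex.I * (t:ℂ))^2 - 10/(-Complex.I * (t:ℂ))^3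
        + 24/(-Complex.I * (t:ℂ))^4 - 24/(-Complex.I * (t:ℂ))^5‖ ≤ 60/T^2 := by
      have hre : ((2:ℂ)/(-Complex.I * (t:ℂ))^2 - 10/(-Complex.I * (t:ℂ))^3
          + 24/(-Complex.I * (t:ℂ))^4 - 24/(-Complex.I * (t:ℂ))^5)
          = ((2:ℝ):ℂ)/(-Complex.I * (t:ℂ))^2 + ((-10:ℝ):ℂ)/(-Complex.I * (t:ℂ))^3
            + ((24:ℝ):ℂ)/(-Complex.I * (t:ℂ))^4 + ((-24:ℝ):ℂ)/(-Complex.I * (t:ℂ))^5 := by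
        push_cast; ring
      rw [hre]
      exact hQ 2 (-10) 24 (-24) (by norm_num)
    have hQ2 : ‖(-2:ℂ)/(-Complex.I * (t:ℂ))^2 - 10/(-Complex.I * (t:ℂ))^3
        - 24/(-Complex.I * (t:ℂ))^4 - 24/(-Complex.I * (t:ℂ))^5‖ ≤ 60/T^2 := by
      have hre : ((-2:ℂ)/(-Complex.I * (t:ℂ))^2 - 10/(-Complex.I * (t:ℂ))^3
          - 24/(-Complex.I * (t:ℂ))^4 - 24/(-Complex.I * (t:ℂ))^5)
          = ((-2:ℝ):ℂ)/(-Complex.I * (t:ℂ))^2 + ((-10:ℝ):ℂ)/(-Complex.I * (t:ℂ))^3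
            + ((-24:ℝ):ℂ)/(-Complex.I * (t:ℂ))^4 + ((-24:ℝ):ℂ)/(-Complex.I * (t:ℂ))^5 := by
        push_cast; ring
      rw [hre]
      exact hQ (-2) (-10) (-24) (-24) (by norm_num)
    have htri := norm_sub_le
        (Complex.exp (-Complex.I * t) * ((2:ℂ)/(-Complex.I * (t:ℂ))^2
          - 10/(-Complex.I * (t:ℂ))^3 + 24/(-Complex.I * (t:ℂ))^4 - 24/(-Complex.I * (t:ℂ))^5))
        (Complex.exp (Complex.I * t) * ((-2:ℂ)/(-Complex.I * (t:ℂ))^2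
          - 10/(-Complex.I * (t:ℂ))^3 - 24/(-Complex.I * (t:ℂ))^4 - 24/(-Complex.I * (t:ℂ))^5))
    rw [norm_mul, norm_mul] at htri
    rw [hexp1, hexp2, one_mul, one_mul] at htri
    refine htri.trans ?_
    have h120 : (60:ℝ)/T^2 + 60/T^2 ≤ 480 / (1 + T)^2 := by
      rw [← add_div, div_le_div_iff₀ (by positivity) (by positivity)]
      nlinarith [hT1, hT0]
    linarith
end

section
/- There exists a constant C > 0 such that for every t ∈ ℝ, |∫₀^{2π} cos²θ sin²θ e^{−i t cos θ} dθ| ≤ C (1 + |t|)^{−3/2}. -/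
open Real intervalIntegral

noncomputable def EE (t u : ℝ) : ℂ := Complex.exp (-Complex.I * t * u)
noncomputable def gg (u : ℝ) : ℝ := u ^ 2 * Real.sqrt (1 - u ^ 2)
noncomputable def gg1 (u : ℝ) : ℝ := (2 * u - 3 * u ^ 3) / Real.sqrt (1 - u ^ 2)
noncomputable def gg2 (u : ℝ) : ℝ :=
  (2 - 9 * u ^ 2) / Real.sqrt (1 - u ^ 2)
    + (2 * u - 3 * u ^ 3) * u / ((1 - u ^ 2) * Real.sqrt (1 - u ^ 2))

lemma normEE (t u : ℝ) : ‖EE t u‖ = 1 := by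
  rw [EE, Complex.norm_exp]
  simp

lemma hasDerivAt_EE (t u : ℝ) : HasDerivAt (EE t) (-Complex.I * t * EE t u) u := by
  have h1 : HasDerivAt (fun y : ℝ => (y : ℂ)) 1 u := (hasDerivAt_id u).ofReal_comp
  have h2 : HasDerivAt (fun y : ℝ => -Complex.I * t * (y : ℂ)) (-Complex.I * t) u := by
    simpa using h1.const_mul (-Complex.I * t)
  have h3 := h2.cexp
  unfold EE
  convert h3 using 1
  ring

lemma hasDerivAt_sqrt1 {u : ℝ} (h : 0 < 1 - u ^ 2) :
    HasDerivAt (fun u : ℝ => Real.sqrt (1 - u ^ 2)) (-u / Real.sqrt (1 - u ^ 2)) u := by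
  have h0 : HasDerivAt (fun u : ℝ => 1 - u ^ 2) (-(2 * u)) u := by
    simpa using (hasDerivAt_pow 2 u).const_sub 1
  have := (Real.hasDerivAt_sqrt h.ne').comp u h0
  refine this.congr_deriv (Eq.symm ?_)
  have hs : Real.sqrt (1 - u ^ 2) ≠ 0 := by positivity
  field_simp

lemma hasDerivAt_gg {u : ℝ} (h : 0 < 1 - u ^ 2) : HasDerivAt gg (gg1 u) u := by
  have hs : (0:ℝ) < Real.sqrt (1 - u ^ 2) := Real.sqrt_pos.2 h
  have hsq : Real.sqrt (1 - u ^ 2) ^ 2 = 1 - u ^ 2 := Real.sq_sqrt h.le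
  have := (hasDerivAt_pow 2 u).mul (hasDerivAt_sqrt1 h)
  unfold gg gg1
  refine this.congr_deriv (Eq.symm ?_)
  field_simp
  linear_combination (-2*u) * hsq

lemma hasDerivAt_gg1 {u : ℝ} (h : 0 < 1 - u ^ 2) : HasDerivAt gg1 (gg2 u) u := by
  have hs : (0:ℝ) < Real.sqrt (1 - u ^ 2) := Real.sqrt_pos.2 h
  have hsq : Real.sqrt (1 - u ^ 2) ^ 2 = 1 - u ^ 2 := Real.sq_sqrt h.le
  have hN : HasDerivAt (fun u : ℝ => 2 * u - 3 * u ^ 3) (2 - 9 * u ^ 2) u := by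
    have := ((hasDerivAt_id u).const_mul 2).sub ((hasDerivAt_pow 3 u).const_mul 3)
    refine this.congr_deriv (Eq.symm ?_)
    ring
  have := hN.div (hasDerivAt_sqrt1 h) hs.ne'
  unfold gg1 gg2
  refine this.congr_deriv (Eq.symm ?_)
  rw [hsq]
  field_simp
  linear_combination ((22*u^2 - 20*u^4 + 9*u^6 - 4) + (2 - 11*u^2 + 9*u^4) * (1 - u^2)) * hsq

lemma hasDerivAt_psi {u : ℝ} (h : 0 < 1 - u ^ 2) :
    HasDerivAt (fun u : ℝ => u / Real.sqrt (1 - u ^ 2))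
      (1 / ((1 - u ^ 2) * Real.sqrt (1 - u ^ 2))) u := by
  have hs : (0:ℝ) < Real.sqrt (1 - u ^ 2) := Real.sqrt_pos.2 h
  have hsq : Real.sqrt (1 - u ^ 2) ^ 2 = 1 - u ^ 2 := Real.sq_sqrt h.le
  have := (hasDerivAt_id u).div (hasDerivAt_sqrt1 h) hs.ne'
  refine this.congr_deriv (Eq.symm ?_)
  rw [hsq]
  field_simp
  simp only [id_eq, hsq]
  ring

lemma contEE (t : ℝ) : Continuous (EE t) := by
  unfold EE
  fun_prop

lemma contgg : Continuous gg := by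
  unfold gg
  fun_prop

lemma contggEE (t : ℝ) : Continuous (fun u : ℝ => (gg u : ℂ) * EE t u) :=
  (Complex.continuous_ofReal.comp contgg).mul (contEE t)

set_option maxHeartbeats 2000000 in
lemma key_s6 (t : ℝ) (ht : 2 ≤ |t|) :
    ‖∫ u in (-1:ℝ)..1, (gg u : ℂ) * EE t u‖ ≤ 44 / (|t| * Real.sqrt |t|) := by
  have hT : (0:ℝ) < |t| := by linarith
  set ε : ℝ := |t|⁻¹ with hεdef
  have hε : 0 < ε := by positivity
  have hε2 : ε ≤ 1/2 := by
    rw [hεdef]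
    rw [inv_le_comm₀ (by linarith) (by norm_num)]
    linarith
  set a : ℝ := -1 + ε with hadef
  set b : ℝ := 1 - ε with hbdef
  have hab : a ≤ b := by simp [hadef, hbdef]; linarith
  have hb2 : 1 - b ^ 2 = ε * (2 - ε) := by simp [hbdef]; ring
  have ha2 : 1 - a ^ 2 = ε * (2 - ε) := by simp [hadef]; ring
  have hεε : ε ≤ ε * (2 - ε) := by nlinarith
  have hpos : ∀ u ∈ Set.uIcc a b, 0 < 1 - u ^ 2 := by
    intro u hu
    rw [Set.uIcc_of_le hab] at hu
    have h1 : -1 + ε ≤ u := hu.1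
    have h2 : u ≤ 1 - ε := hu.2
    nlinarith
  have hposε : ∀ u ∈ Set.uIcc a b, ε ≤ 1 - u ^ 2 := by
    intro u hu
    rw [Set.uIcc_of_le hab] at hu
    have h1 : -1 + ε ≤ u := hu.1
    have h2 : u ≤ 1 - ε := hu.2
    nlinarith
  -- continuity on [a,b]
  have hsne : ∀ u ∈ Set.uIcc a b, Real.sqrt (1 - u ^ 2) ≠ 0 := fun u hu =>
    (Real.sqrt_pos.2 (hpos u hu)).ne'
  have hone : ∀ u ∈ Set.uIcc a b, (1 - u ^ 2) ≠ 0 := fun u hu => (hpos u hu).ne'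
  have hcont1 : ContinuousOn gg1 (Set.uIcc a b) := by
    unfold gg1
    exact (continuousOn_const.mul continuousOn_id |>.sub
      (continuousOn_const.mul (continuousOn_pow 3))).div
      ((Real.continuous_sqrt.comp (by fun_prop)).continuousOn) hsne
  have hcont2 : ContinuousOn gg2 (Set.uIcc a b) := by
    unfold gg2
    apply ContinuousOn.add
    · exact (continuousOn_const.sub (continuousOn_const.mul (continuousOn_pow 2))).div
        ((Real.continuous_sqrt.comp (by fun_prop)).continuousOn) hsne
    · refine ContinuousOn.div (by fun_prop) (ContinuousOn.mul (by fun_prop)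
        ((Real.continuous_sqrt.comp (by fun_prop)).continuousOn)) ?_
      intro u hu
      exact mul_ne_zero (hone u hu) (hsne u hu)
  have hcontψ : ContinuousOn (fun u : ℝ => 14 * (1 / ((1 - u ^ 2) * Real.sqrt (1 - u ^ 2))))
      (Set.uIcc a b) := by
    refine continuousOn_const.mul (ContinuousOn.div continuousOn_const
      (ContinuousOn.mul (by fun_prop)
        ((Real.continuous_sqrt.comp (by fun_prop)).continuousOn)) ?_)
    intro u hu
    exact mul_ne_zero (hone u hu) (hsne u hu)
  have hint1 : IntervalIntegrable (fun x => (gg1 x : ℂ)) MeasureTheory.volume a b :=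
    (Complex.continuous_ofReal.comp_continuousOn hcont1).intervalIntegrable
  have hint2 : IntervalIntegrable (fun x => (gg2 x : ℂ)) MeasureTheory.volume a b :=
    (Complex.continuous_ofReal.comp_continuousOn hcont2).intervalIntegrable
  have hintE : IntervalIntegrable (EE t) MeasureTheory.volume a b :=
    (contEE t).intervalIntegrable a b
  have htne : (t:ℂ) ≠ 0 := by
    simp only [ne_eq, Complex.ofReal_eq_zero]
    intro h; rw [h] at hT; simp at hT
  set c : ℂ := (-Complex.I * t)⁻¹ with hcdef
  have hcnorm : ‖c‖ = |t|⁻¹ := by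
    rw [hcdef]
    simp [map_inv₀]
  set v : ℝ → ℂ := fun u => c * EE t u with hvdef
  have hv : ∀ u : ℝ, HasDerivAt v (EE t u) u := by
    intro u
    have := (hasDerivAt_EE t u).const_mul c
    refine this.congr_deriv (Eq.symm ?_)
    rw [hcdef]
    field_simp
  have hvnorm : ∀ u : ℝ, ‖v u‖ = |t|⁻¹ := by
    intro u
    rw [hvdef]
    simp only [norm_mul, hcnorm, normEE, mul_one]
  -- integration by parts, twice
  have IBP1 : ∫ u in a..b, (gg u : ℂ) * EE t u
      = (gg b : ℂ) * v b - (gg a : ℂ) * v a - ∫ u in a..b, (gg1 u : ℂ) * v u := by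
    apply integral_mul_deriv_eq_deriv_mul
      (fun x hx => ((hasDerivAt_gg (hpos x hx)).ofReal_comp))
      (fun x _ => hv x) hint1 hintE
  have IBP2 : ∫ u in a..b, (gg1 u : ℂ) * EE t u
      = (gg1 b : ℂ) * v b - (gg1 a : ℂ) * v a - ∫ u in a..b, (gg2 u : ℂ) * v u := by
    apply integral_mul_deriv_eq_deriv_mul
      (fun x hx => ((hasDerivAt_gg1 (hpos x hx)).ofReal_comp))
      (fun x _ => hv x) hint2 hintE
  have pull1 : ∫ u in a..b, (gg1 u : ℂ) * v u = c * ∫ u in a..b, (gg1 u : ℂ) * EE t u := by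
    rw [← integral_const_mul]
    apply integral_congr
    intro x _
    rw [hvdef]; ring
  have pull2 : ∫ u in a..b, (gg2 u : ℂ) * v u = c * ∫ u in a..b, (gg2 u : ℂ) * EE t u := by
    rw [← integral_const_mul]
    apply integral_congr
    intro x _
    rw [hvdef]; ring
  -- endpoint value bounds
  have hsε : (0:ℝ) < Real.sqrt ε := Real.sqrt_pos.2 hε
  have hbmem : b ∈ Set.uIcc a b := Set.right_mem_uIcc
  have hamem : a ∈ Set.uIcc a b := Set.left_mem_uIcc
  have hsb : Real.sqrt ε ≤ Real.sqrt (1 - b ^ 2) := by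
    rw [hb2]; exact Real.sqrt_le_sqrt hεε
  have hsa : Real.sqrt ε ≤ Real.sqrt (1 - a ^ 2) := by
    rw [ha2]; exact Real.sqrt_le_sqrt hεε
  have hb1 : |b| ≤ 1 := by rw [hbdef, abs_le]; constructor <;> linarith
  have ha1 : |a| ≤ 1 := by rw [hadef, abs_le]; constructor <;> linarith
  have hsqb : Real.sqrt (1 - b ^ 2) ≤ Real.sqrt (2 * ε) := by
    rw [hb2]; exact Real.sqrt_le_sqrt (by nlinarith)
  have hsqa : Real.sqrt (1 - a ^ 2) ≤ Real.sqrt (2 * ε) := by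
    rw [ha2]; exact Real.sqrt_le_sqrt (by nlinarith)
  have hggval : ∀ u : ℝ, |u| ≤ 1 → Real.sqrt (1 - u ^ 2) ≤ Real.sqrt (2 * ε) →
      |gg u| ≤ Real.sqrt (2 * ε) := by
    intro u hu hsu
    rw [gg, abs_mul, abs_of_nonneg (Real.sqrt_nonneg _), abs_pow]
    calc |u| ^ 2 * Real.sqrt (1 - u ^ 2) ≤ 1 * Real.sqrt (2 * ε) := by
          apply mul_le_mul (by nlinarith [abs_nonneg u]) hsu (Real.sqrt_nonneg _) zero_le_one
      _ = Real.sqrt (2 * ε) := one_mul _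
  have hgg1val : ∀ u : ℝ, |u| ≤ 1 → Real.sqrt ε ≤ Real.sqrt (1 - u ^ 2) →
      |gg1 u| ≤ 5 / Real.sqrt ε := by
    intro u hu hsu
    rw [gg1, abs_div, abs_of_nonneg (Real.sqrt_nonneg _)]
    apply div_le_div₀ (by norm_num) ?_ hsε hsu
    rw [abs_le] at hu ⊢
    constructor <;> nlinarith [hu.1, hu.2]
  -- bound on the gg2 integral
  have hI2 : ‖∫ u in a..b, (gg2 u : ℂ) * EE t u‖ ≤ 28 / Real.sqrt ε := by
    have hb1' : ∀ u ∈ Set.uIcc a b, ‖(gg2 u : ℂ) * EE t u‖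
        ≤ 14 * (1 / ((1 - u ^ 2) * Real.sqrt (1 - u ^ 2))) := by
      intro u hu
      rw [norm_mul, normEE, mul_one, Complex.norm_real, Real.norm_eq_abs]
      have h1 : 0 < 1 - u ^ 2 := hpos u hu
      have h2 : (0:ℝ) < Real.sqrt (1 - u ^ 2) := Real.sqrt_pos.2 h1
      have hu1 : |u| ≤ 1 := by
        rw [abs_le]; constructor <;> nlinarith
      rw [abs_le] at hu1
      rw [gg2]
      have e1 : |(2 - 9 * u ^ 2) / Real.sqrt (1 - u ^ 2)
          + (2 * u - 3 * u ^ 3) * u / ((1 - u ^ 2) * Real.sqrt (1 - u ^ 2))|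
          ≤ |(2 - 9 * u ^ 2)| / Real.sqrt (1 - u ^ 2)
          + |(2 * u - 3 * u ^ 3) * u| / ((1 - u ^ 2) * Real.sqrt (1 - u ^ 2)) := by
        refine (abs_add_le _ _).trans ?_
        rw [abs_div, abs_div, abs_of_nonneg (Real.sqrt_nonneg _),
          abs_of_nonneg (by positivity : (0:ℝ) ≤ (1 - u ^ 2) * Real.sqrt (1 - u ^ 2))]
      refine e1.trans ?_
      have e2 : |(2 - 9 * u ^ 2)| ≤ 9 := by
        rw [abs_le]; constructor <;> nlinarith
      have e3 : |(2 * u - 3 * u ^ 3) * u| ≤ 5 := by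
        rw [abs_le]; constructor <;> nlinarith
      have e4 : |(2 - 9 * u ^ 2)| / Real.sqrt (1 - u ^ 2)
          ≤ 9 / ((1 - u ^ 2) * Real.sqrt (1 - u ^ 2)) := by
        have h1u : (1 - u ^ 2) * Real.sqrt (1 - u ^ 2) ≤ Real.sqrt (1 - u ^ 2) :=
          mul_le_of_le_one_left h2.le (by nlinarith)
        calc |(2 - 9 * u ^ 2)| / Real.sqrt (1 - u ^ 2) ≤ 9 / Real.sqrt (1 - u ^ 2) := by
              gcongr
          _ ≤ 9 / ((1 - u ^ 2) * Real.sqrt (1 - u ^ 2)) :=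
              div_le_div_of_nonneg_left (by norm_num) (by positivity) h1u
      have e5 : |(2 * u - 3 * u ^ 3) * u| / ((1 - u ^ 2) * Real.sqrt (1 - u ^ 2))
          ≤ 5 / ((1 - u ^ 2) * Real.sqrt (1 - u ^ 2)) := by
        gcongr
      have : (9:ℝ) / ((1 - u ^ 2) * Real.sqrt (1 - u ^ 2))
          + 5 / ((1 - u ^ 2) * Real.sqrt (1 - u ^ 2))
          = 14 * (1 / ((1 - u ^ 2) * Real.sqrt (1 - u ^ 2))) := by ring
      linarith [e4, e5]
    have hintψ : IntervalIntegrable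
        (fun u : ℝ => 14 * (1 / ((1 - u ^ 2) * Real.sqrt (1 - u ^ 2))))
        MeasureTheory.volume a b := hcontψ.intervalIntegrable
    have step := norm_integral_le_of_norm_le hab
      (f := fun u => (gg2 u : ℂ) * EE t u)
      (g := fun u : ℝ => 14 * (1 / ((1 - u ^ 2) * Real.sqrt (1 - u ^ 2))))
      (by
        refine MeasureTheory.ae_of_all _ (fun u hu => ?_)
        exact hb1' u (by rw [Set.uIcc_of_le hab]; exact Set.Ioc_subset_Icc_self hu)) hintψ
    refine step.trans ?_
    have hψint : ∫ u in a..b, 14 * (1 / ((1 - u ^ 2) * Real.sqrt (1 - u ^ 2)))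
        = 14 * (b / Real.sqrt (1 - b ^ 2)) - 14 * (a / Real.sqrt (1 - a ^ 2)) := by
      apply integral_eq_sub_of_hasDerivAt
        (f := fun u : ℝ => 14 * (u / Real.sqrt (1 - u ^ 2)))
      · intro x hx
        exact (hasDerivAt_psi (hpos x hx)).const_mul 14
      · exact hintψ
    rw [hψint]
    have hba : a = -b := by rw [hadef, hbdef]; ring
    rw [hba]
    simp only [neg_sq]
    rw [hb2]
    have h9 : (0:ℝ) < Real.sqrt (ε * (2 - ε)) := Real.sqrt_pos.2 (by nlinarith)
    have hD : 14 * (b / Real.sqrt (ε * (2 - ε))) - 14 * (-b / Real.sqrt (ε * (2 - ε)))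
        = 28 * b / Real.sqrt (ε * (2 - ε)) := by ring
    rw [hD]
    have hb0 : 0 ≤ b := by rw [hbdef]; linarith
    have hsb' : Real.sqrt ε ≤ Real.sqrt (ε * (2 - ε)) := Real.sqrt_le_sqrt hεε
    have hbb : b ≤ 1 := by rw [hbdef]; linarith
    apply div_le_div₀ (by positivity) (by nlinarith) hsε hsb'
  -- bound on the gg1 integral
  have hI1 : ‖∫ u in a..b, (gg1 u : ℂ) * EE t u‖
      ≤ 38 * (Real.sqrt ε)⁻¹ * |t|⁻¹ := by
    rw [IBP2, pull2]
    have h1 : ‖(gg1 b : ℂ) * v b - (gg1 a : ℂ) * v a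
        - c * ∫ u in a..b, (gg2 u : ℂ) * EE t u‖
        ≤ ‖(gg1 b : ℂ) * v b‖ + ‖(gg1 a : ℂ) * v a‖
          + ‖c * ∫ u in a..b, (gg2 u : ℂ) * EE t u‖ :=
      (norm_sub_le _ _).trans (add_le_add (norm_sub_le _ _) le_rfl)
    refine h1.trans ?_
    have e1 : ‖(gg1 b : ℂ) * v b‖ ≤ 5 / Real.sqrt ε * |t|⁻¹ := by
      rw [norm_mul, Complex.norm_real, Real.norm_eq_abs, hvnorm]
      exact mul_le_mul_of_nonneg_right (hgg1val b hb1 hsb) (by positivity)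
    have e2 : ‖(gg1 a : ℂ) * v a‖ ≤ 5 / Real.sqrt ε * |t|⁻¹ := by
      rw [norm_mul, Complex.norm_real, Real.norm_eq_abs, hvnorm]
      exact mul_le_mul_of_nonneg_right (hgg1val a ha1 hsa) (by positivity)
    have e3 : ‖c * ∫ u in a..b, (gg2 u : ℂ) * EE t u‖ ≤ |t|⁻¹ * (28 / Real.sqrt ε) := by
      rw [norm_mul, hcnorm]
      exact mul_le_mul_of_nonneg_left hI2 (by positivity)
    have : 5 / Real.sqrt ε * |t|⁻¹ + 5 / Real.sqrt ε * |t|⁻¹ + |t|⁻¹ * (28 / Real.sqrt ε)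
        = 38 * (Real.sqrt ε)⁻¹ * |t|⁻¹ := by
      field_simp
      ring
    linarith
  -- bound on the middle integral
  have hM : ‖∫ u in a..b, (gg u : ℂ) * EE t u‖
      ≤ Real.sqrt (2 * ε) * |t|⁻¹ + Real.sqrt (2 * ε) * |t|⁻¹
        + 38 * (Real.sqrt ε)⁻¹ * |t|⁻¹ * |t|⁻¹ := by
    rw [IBP1, pull1]
    have h1 : ‖(gg b : ℂ) * v b - (gg a : ℂ) * v a
        - c * ∫ u in a..b, (gg1 u : ℂ) * EE t u‖
        ≤ ‖(gg b : ℂ) * v b‖ + ‖(gg a : ℂ) * v a‖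
          + ‖c * ∫ u in a..b, (gg1 u : ℂ) * EE t u‖ :=
      (norm_sub_le _ _).trans (add_le_add (norm_sub_le _ _) le_rfl)
    refine h1.trans ?_
    have e1 : ‖(gg b : ℂ) * v b‖ ≤ Real.sqrt (2 * ε) * |t|⁻¹ := by
      rw [norm_mul, Complex.norm_real, Real.norm_eq_abs, hvnorm]
      exact mul_le_mul_of_nonneg_right (hggval b hb1 hsqb) (by positivity)
    have e2 : ‖(gg a : ℂ) * v a‖ ≤ Real.sqrt (2 * ε) * |t|⁻¹ := by
      rw [norm_mul, Complex.norm_real, Real.norm_eq_abs, hvnorm]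
      exact mul_le_mul_of_nonneg_right (hggval a ha1 hsqa) (by positivity)
    have e3 : ‖c * ∫ u in a..b, (gg1 u : ℂ) * EE t u‖
        ≤ |t|⁻¹ * (38 * (Real.sqrt ε)⁻¹ * |t|⁻¹) := by
      rw [norm_mul, hcnorm]
      exact mul_le_mul_of_nonneg_left hI1 (by positivity)
    have : |t|⁻¹ * (38 * (Real.sqrt ε)⁻¹ * |t|⁻¹)
        = 38 * (Real.sqrt ε)⁻¹ * |t|⁻¹ * |t|⁻¹ := by ring
    linarith
  -- endpoint pieces
  have hEnd1 : ‖∫ u in (-1:ℝ)..a, (gg u : ℂ) * EE t u‖ ≤ Real.sqrt (2 * ε) * ε := by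
    have hle : (-1:ℝ) ≤ a := by rw [hadef]; linarith
    have := norm_integral_le_of_norm_le_const (a := (-1:ℝ)) (b := a)
      (C := Real.sqrt (2 * ε)) (f := fun u => (gg u : ℂ) * EE t u) ?_
    · refine this.trans ?_
      have : |a - (-1)| = ε := by rw [hadef]; rw [abs_of_nonneg (by linarith)]; ring
      rw [this]
    · intro u hu
      rw [Set.uIoc_of_le hle] at hu
      obtain ⟨hu1, hu2⟩ := hu
      rw [norm_mul, normEE, mul_one, Complex.norm_real, Real.norm_eq_abs]
      apply hggval u (by rw [abs_le]; constructor <;> nlinarith)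
      exact Real.sqrt_le_sqrt (by nlinarith)
  have hEnd2 : ‖∫ u in b..(1:ℝ), (gg u : ℂ) * EE t u‖ ≤ Real.sqrt (2 * ε) * ε := by
    have hle : b ≤ (1:ℝ) := by rw [hbdef]; linarith
    have := norm_integral_le_of_norm_le_const (a := b) (b := (1:ℝ))
      (C := Real.sqrt (2 * ε)) (f := fun u => (gg u : ℂ) * EE t u) ?_
    · refine this.trans ?_
      have : |(1:ℝ) - b| = ε := by rw [hbdef]; rw [abs_of_nonneg (by linarith)]; ring
      rw [this]
    · intro u hu
      rw [Set.uIoc_of_le hle] at hu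
      obtain ⟨hu1, hu2⟩ := hu
      rw [norm_mul, normEE, mul_one, Complex.norm_real, Real.norm_eq_abs]
      apply hggval u (by rw [abs_le]; constructor <;> nlinarith)
      exact Real.sqrt_le_sqrt (by nlinarith)
  -- splitting
  have i1 : IntervalIntegrable (fun u : ℝ => (gg u : ℂ) * EE t u) MeasureTheory.volume (-1) a :=
    (contggEE t).intervalIntegrable _ _
  have i2 : IntervalIntegrable (fun u : ℝ => (gg u : ℂ) * EE t u) MeasureTheory.volume a b :=
    (contggEE t).intervalIntegrable _ _
  have i3 : IntervalIntegrable (fun u : ℝ => (gg u : ℂ) * EE t u) MeasureTheory.volume b 1 :=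
    (contggEE t).intervalIntegrable _ _
  have hsplit : ∫ u in (-1:ℝ)..1, (gg u : ℂ) * EE t u
      = ((∫ u in (-1:ℝ)..a, (gg u : ℂ) * EE t u) + ∫ u in a..b, (gg u : ℂ) * EE t u)
        + ∫ u in b..(1:ℝ), (gg u : ℂ) * EE t u := by
    rw [integral_add_adjacent_intervals i1 i2, integral_add_adjacent_intervals (i1.trans i2) i3]
  rw [hsplit]
  have htotal : ‖((∫ u in (-1:ℝ)..a, (gg u : ℂ) * EE t u)
      + ∫ u in a..b, (gg u : ℂ) * EE t u) + ∫ u in b..(1:ℝ), (gg u : ℂ) * EE t u‖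
      ≤ Real.sqrt (2 * ε) * ε
        + (Real.sqrt (2 * ε) * |t|⁻¹ + Real.sqrt (2 * ε) * |t|⁻¹
          + 38 * (Real.sqrt ε)⁻¹ * |t|⁻¹ * |t|⁻¹)
        + Real.sqrt (2 * ε) * ε :=
    (norm_add_le _ _).trans (add_le_add ((norm_add_le _ _).trans (add_le_add hEnd1 hM)) hEnd2)
  refine htotal.trans ?_
  -- final arithmetic
  have hS0 : (0:ℝ) < Real.sqrt |t| := Real.sqrt_pos.2 hT
  have hS2 : Real.sqrt |t| ^ 2 = |t| := Real.sq_sqrt hT.le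
  have hSε : Real.sqrt ε = (Real.sqrt |t|)⁻¹ := by rw [hεdef, Real.sqrt_inv]
  have h2ε : Real.sqrt (2 * ε) = Real.sqrt 2 * Real.sqrt ε := Real.sqrt_mul (by norm_num) ε
  have hsq2 : Real.sqrt 2 ≤ 1.5 := by
    nlinarith [Real.sq_sqrt (by norm_num : (0:ℝ) ≤ 2), Real.sqrt_nonneg 2]
  have hsq2' : (0:ℝ) ≤ Real.sqrt 2 := Real.sqrt_nonneg 2
  set S : ℝ := Real.sqrt |t| with hSdef
  have hu1 : Real.sqrt (2 * ε) * ε = Real.sqrt 2 * (S⁻¹ * |t|⁻¹) := by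
    rw [h2ε, hSε, hεdef]; ring
  have hu2 : Real.sqrt (2 * ε) * |t|⁻¹ = Real.sqrt 2 * (S⁻¹ * |t|⁻¹) := by
    rw [h2ε, hSε]; ring
  have hu3 : 38 * (Real.sqrt ε)⁻¹ * |t|⁻¹ * |t|⁻¹ = 38 * (S⁻¹ * |t|⁻¹) := by
    rw [hSε, inv_inv]
    rw [← hS2]
    field_simp
  have hu4 : (44:ℝ) / (|t| * S) = 44 * (S⁻¹ * |t|⁻¹) := by
    rw [div_eq_mul_inv, mul_inv]; ring
  rw [hu1, hu3, hu4]
  have hupos : (0:ℝ) ≤ S⁻¹ * |t|⁻¹ := by positivity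
  nlinarith [hsq2, hupos]

lemma cov (t : ℝ) :
    (∫ θ in (0:ℝ)..(2 * π), ((Real.cos θ ^ 2 * Real.sin θ ^ 2 : ℝ) : ℂ) *
        Complex.exp (-Complex.I * t * Real.cos θ))
      = 2 * ∫ u in (-1:ℝ)..1, (gg u : ℂ) * EE t u := by
  set G : ℝ → ℂ := fun u => (gg u : ℂ) * EE t u with hGdef
  have hGc : Continuous G := contggEE t
  have hcos : ∀ x : ℝ, HasDerivAt Real.cos (-Real.sin x) x := Real.hasDerivAt_cos
  have hsin' : Continuous (fun θ : ℝ => -Real.sin θ) := Real.continuous_sin.neg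
  have h1 : ∫ θ in (0:ℝ)..π, (-Real.sin θ) • G (Real.cos θ)
      = ∫ u in (Real.cos 0)..(Real.cos π), G u :=
    integral_comp_smul_deriv (fun x _ => hcos x) hsin'.continuousOn hGc
  have h2 : ∫ θ in π..(2*π), (-Real.sin θ) • G (Real.cos θ)
      = ∫ u in (Real.cos π)..(Real.cos (2*π)), G u :=
    integral_comp_smul_deriv (fun x _ => hcos x) hsin'.continuousOn hGc
  have hsq : ∀ θ : ℝ, Real.sqrt (1 - Real.cos θ ^ 2) = |Real.sin θ| := by
    intro θ
    rw [show (1 : ℝ) - Real.cos θ ^ 2 = Real.sin θ ^ 2 by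
      nlinarith [Real.sin_sq_add_cos_sq θ]]
    exact Real.sqrt_sq_eq_abs _
  have e1 : ∫ θ in (0:ℝ)..π, ((Real.cos θ ^ 2 * Real.sin θ ^ 2 : ℝ) : ℂ) *
      Complex.exp (-Complex.I * t * Real.cos θ) = ∫ u in (-1:ℝ)..1, G u := by
    have congr1 : ∫ θ in (0:ℝ)..π, ((Real.cos θ ^ 2 * Real.sin θ ^ 2 : ℝ) : ℂ) *
        Complex.exp (-Complex.I * t * Real.cos θ)
        = ∫ θ in (0:ℝ)..π, -((-Real.sin θ) • G (Real.cos θ)) := by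
      apply integral_congr
      intro θ hθ
      rw [Set.uIcc_of_le Real.pi_nonneg] at hθ
      have hs : 0 ≤ Real.sin θ := Real.sin_nonneg_of_nonneg_of_le_pi hθ.1 hθ.2
      simp only [hGdef, gg, EE, hsq θ, abs_of_nonneg hs, Complex.real_smul]
      push_cast
      ring
    rw [congr1, intervalIntegral.integral_neg, h1, Real.cos_zero, Real.cos_pi,
      integral_symm]
    simp
  have e2 : ∫ θ in π..(2*π), ((Real.cos θ ^ 2 * Real.sin θ ^ 2 : ℝ) : ℂ) *
      Complex.exp (-Complex.I * t * Real.cos θ) = ∫ u in (-1:ℝ)..1, G u := by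
    have congr2 : ∫ θ in π..(2*π), ((Real.cos θ ^ 2 * Real.sin θ ^ 2 : ℝ) : ℂ) *
        Complex.exp (-Complex.I * t * Real.cos θ)
        = ∫ θ in π..(2*π), (-Real.sin θ) • G (Real.cos θ) := by
      apply integral_congr
      intro θ hθ
      rw [Set.uIcc_of_le (by linarith [Real.pi_nonneg] : π ≤ 2*π)] at hθ
      have hs : Real.sin θ ≤ 0 := by
        have h1' : 0 ≤ Real.sin (θ - π) := by
          apply Real.sin_nonneg_of_nonneg_of_le_pi <;>
            [linarith [hθ.1]; linarith [hθ.2]]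
        rw [Real.sin_sub_pi] at h1'
        linarith
      simp only [hGdef, gg, EE, hsq θ, abs_of_nonpos hs, Complex.real_smul]
      push_cast
      ring
    rw [congr2, h2, Real.cos_pi, Real.cos_two_pi]
  have hcontI : Continuous (fun θ : ℝ => ((Real.cos θ ^ 2 * Real.sin θ ^ 2 : ℝ) : ℂ) *
      Complex.exp (-Complex.I * t * Real.cos θ)) := by
    apply Continuous.mul
    · fun_prop
    · apply Complex.continuous_exp.comp
      fun_prop
  have hsplit := integral_add_adjacent_intervals
    (μ := MeasureTheory.volume) (a := (0:ℝ)) (b := π) (c := 2*π)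
    (hcontI.intervalIntegrable _ _) (hcontI.intervalIntegrable _ _)
  rw [← hsplit, e1, e2]
  ring

lemma rpow_help {x : ℝ} (hx : 0 ≤ x) :
    (1 + x) ^ (-(3:ℝ)/2) = ((1 + x) * Real.sqrt (1 + x))⁻¹ := by
  have h1 : (0:ℝ) < 1 + x := by linarith
  rw [show -(3:ℝ)/2 = -((3:ℝ)/2) by norm_num, Real.rpow_neg h1.le]
  congr 1
  rw [show (3:ℝ)/2 = 1 + 1/2 by norm_num, Real.rpow_add h1, Real.rpow_one,
    ← Real.sqrt_eq_rpow]

/-- Improved stationary-phase decay of the two-dimensional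
Volterra kernel `∫₀^{2π} cos²θ sin²θ e^{-it cos θ} dθ`: it is bounded by
`C (1+|t|)^{-3/2}`. -/
theorem statement6 :
    ∃ C : ℝ, 0 < C ∧ ∀ t : ℝ,
      ‖∫ θ in (0 : ℝ)..(2 * π),
          ((Real.cos θ ^ 2 * Real.sin θ ^ 2 : ℝ) : ℂ) *
            Complex.exp (-Complex.I * t * Real.cos θ)‖ ≤
        C * (1 + |t|) ^ (-(3 : ℝ) / 2) := by
  refine ⟨300, by norm_num, fun t => ?_⟩
  rw [rpow_help (abs_nonneg t)]
  have hT0 : (0:ℝ) ≤ |t| := abs_nonneg t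
  have h1T : (0:ℝ) < 1 + |t| := by linarith
  have hs1T : (0:ℝ) < Real.sqrt (1 + |t|) := Real.sqrt_pos.2 h1T
  rcases le_or_gt (|t|) 2 with hsmall | hbig
  · have hb : ‖∫ θ in (0 : ℝ)..(2 * π),
        ((Real.cos θ ^ 2 * Real.sin θ ^ 2 : ℝ) : ℂ) *
          Complex.exp (-Complex.I * t * Real.cos θ)‖ ≤ (1/4 : ℝ) * |2 * π - 0| := by
      apply norm_integral_le_of_norm_le_const
      intro θ _
      rw [norm_mul, Complex.norm_real, Real.norm_eq_abs]
      have he : ‖Complex.exp (-Complex.I * t * Real.cos θ)‖ = 1 := normEE t (Real.cos θ)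
      rw [he, mul_one, abs_of_nonneg (by positivity)]
      nlinarith [Real.sin_sq_add_cos_sq θ, sq_nonneg (Real.sin θ ^ 2 - Real.cos θ ^ 2),
        sq_nonneg (Real.sin θ * Real.cos θ)]
    have hπ : |2 * π - 0| = 2 * π := by
      rw [sub_zero, abs_of_nonneg (by positivity)]
    have hb2 : ‖∫ θ in (0 : ℝ)..(2 * π),
        ((Real.cos θ ^ 2 * Real.sin θ ^ 2 : ℝ) : ℂ) *
          Complex.exp (-Complex.I * t * Real.cos θ)‖ ≤ 2 := by
      rw [hπ] at hb
      calc _ ≤ (1/4:ℝ) * (2 * π) := hb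
        _ ≤ 2 := by nlinarith [Real.pi_le_four]
    refine hb2.trans ?_
    have h4 : Real.sqrt (1 + |t|) ≤ 2 := by
      rw [show (2:ℝ) = Real.sqrt 4 by
        rw [show (4:ℝ) = 2^2 by norm_num, Real.sqrt_sq (by norm_num)]]
      exact Real.sqrt_le_sqrt (by linarith)
    have h6 : (1 + |t|) * Real.sqrt (1 + |t|) ≤ 6 := by nlinarith
    have h6' : (6:ℝ)⁻¹ ≤ ((1 + |t|) * Real.sqrt (1 + |t|))⁻¹ :=
      inv_anti₀ (by positivity) h6
    nlinarith
  · rw [cov t, norm_mul]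
    have h2 : ‖(2:ℂ)‖ = 2 := by norm_num
    rw [h2]
    have hk := key_s6 t (by linarith)
    have hTpos : (0:ℝ) < |t| := by linarith
    have hsT : (0:ℝ) < Real.sqrt |t| := Real.sqrt_pos.2 hTpos
    have hcube : ∀ x : ℝ, 0 ≤ x → x * Real.sqrt x = Real.sqrt (x^3) := by
      intro x hx
      rw [show x^3 = x^2 * x by ring, Real.sqrt_mul (sq_nonneg _), Real.sqrt_sq hx]
    have hkey2 : (1 + |t|) * Real.sqrt (1 + |t|) ≤ 2 * (|t| * Real.sqrt |t|) := by
      rw [hcube _ h1T.le, hcube _ hT0]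
      rw [show (2:ℝ) * Real.sqrt (|t|^3) = Real.sqrt (4 * |t|^3) by
        rw [Real.sqrt_mul (by norm_num), show Real.sqrt 4 = 2 by
          rw [show (4:ℝ) = 2^2 by norm_num, Real.sqrt_sq (by norm_num)]]]
      exact Real.sqrt_le_sqrt (by nlinarith [hbig, sq_nonneg (|t| - 2), sq_nonneg |t|, hT0])
    have hfin : 2 * (44 / (|t| * Real.sqrt |t|)) ≤ 300 * ((1 + |t|) * Real.sqrt (1 + |t|))⁻¹ := by
      rw [← div_eq_mul_inv, ← mul_div_assoc]
      rw [div_le_div_iff₀ (by positivity) (by positivity)]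
      nlinarith [mul_pos hTpos hsT]
    calc 2 * ‖∫ u in (-1:ℝ)..1, (gg u : ℂ) * EE t u‖
        ≤ 2 * (44 / (|t| * Real.sqrt |t|)) := by linarith
      _ ≤ _ := hfin
end

section
/- There exists a constant C > 0 such that for every 2π-periodic, three times continuously differentiable function g : ℝ → ℂ with g(0) = g(π) = 0, and every t ∈ ℝ, |∫₀^{2π} e^{−i t cos θ} g(θ) dθ| ≤ C (1 + |t|)^{−3/2} Σ_{m=0}^{3} sup_θ |g^{(m)}(θ)|. -/
set_option maxHeartbeats 1000000

open Real Set intervalIntegral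

lemma half_min_le_sin {θ : ℝ} (h0 : 0 ≤ θ) (h1 : θ ≤ π) :
    min θ (π - θ) / 2 ≤ Real.sin θ := by
  have hpi4 : π ≤ 4 := by linarith [Real.pi_le_four]
  rcases le_or_gt θ (π / 2) with h | h
  · have h2 : 2 / π * θ ≤ Real.sin θ := Real.mul_le_sin h0 h
    have : θ / 2 ≤ 2 / π * θ := by
      rw [div_mul_eq_mul_div, le_div_iff₀ Real.pi_pos]
      nlinarith
    calc min θ (π - θ) / 2 ≤ θ / 2 := by
          apply div_le_div_of_nonneg_right (min_le_left _ _) (by norm_num : (0:ℝ) ≤ 2)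
      _ ≤ 2 / π * θ := this
      _ ≤ Real.sin θ := h2
  · have h0' : 0 ≤ π - θ := by linarith
    have h1' : π - θ ≤ π / 2 := by linarith
    have h2 : 2 / π * (π - θ) ≤ Real.sin (π - θ) := Real.mul_le_sin h0' h1'
    rw [Real.sin_pi_sub] at h2
    have : (π - θ) / 2 ≤ 2 / π * (π - θ) := by
      rw [div_mul_eq_mul_div, le_div_iff₀ Real.pi_pos]
      nlinarith
    calc min θ (π - θ) / 2 ≤ (π - θ) / 2 := by
          apply div_le_div_of_nonneg_right (min_le_right _ _) (by norm_num : (0:ℝ) ≤ 2)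
      _ ≤ Real.sin θ := le_trans this h2

lemma bdd_of_periodic_cont {f : ℝ → ℂ} (hf : Continuous f)
    (hp : Function.Periodic f (2 * π)) :
    BddAbove (Set.range fun θ => ‖f θ‖) := by
  have hsub : (Set.range fun θ => ‖f θ‖) ⊆ (fun θ => ‖f θ‖) '' Set.Icc 0 (2 * π) := by
    rintro x ⟨θ, rfl⟩
    obtain ⟨y, hy, hxy⟩ := hp.exists_mem_Ico₀ (by positivity) θ
    exact ⟨y, ⟨hy.1, hy.2.le⟩, by simp [hxy]⟩
  exact BddAbove.mono hsub (isCompact_Icc.image hf.norm).bddAbove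

lemma periodic_deriv' {f : ℝ → ℂ} (hp : Function.Periodic f (2 * π)) :
    Function.Periodic (deriv f) (2 * π) := by
  intro x
  have : (fun y => f (y + 2 * π)) = f := funext fun y => hp y
  calc deriv f (x + 2 * π) = deriv (fun y => f (y + 2 * π)) x := (deriv_comp_add_const f _ x).symm
    _ = deriv f x := by rw [this]

lemma ibp_aux (t : ℝ) (a b : ℝ) (hab : a ≤ b) (F F' : ℝ → ℂ)
    (hF : ∀ θ ∈ Icc a b, HasDerivAt F (F' θ) θ)
    (hFc : ContinuousOn F (Icc a b)) (hF'c : ContinuousOn F' (Icc a b)) :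
    (Complex.I * t) * ∫ θ in a..b, Complex.exp (-Complex.I * t * Real.cos θ) *
        ((Real.sin θ : ℂ) * F θ) =
      (Complex.exp (-Complex.I * t * Real.cos b) * F b
        - Complex.exp (-Complex.I * t * Real.cos a) * F a)
      - ∫ θ in a..b, Complex.exp (-Complex.I * t * Real.cos θ) * F' θ := by
  set e : ℝ → ℂ := fun θ => Complex.exp (-Complex.I * t * Real.cos θ) with hedef
  have he : ∀ θ : ℝ, HasDerivAt e (Complex.I * t * Real.sin θ * e θ) θ := by
    intro θ
    have hc : HasDerivAt (fun θ : ℝ => ((Real.cos θ : ℝ) : ℂ)) (-Real.sin θ : ℝ) θ :=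
      (Real.hasDerivAt_cos θ).ofReal_comp
    have := ((hc.const_mul (-Complex.I * t)).cexp)
    convert this using 1
    rw [hedef]
    push_cast
    ring_nf
  have hecont : Continuous e := by
    apply Complex.continuous_exp.comp
    continuity
  have huIcc : uIcc a b = Icc a b := uIcc_of_le hab
  have hderiv : ∀ θ ∈ uIcc a b, HasDerivAt (fun θ => e θ * F θ)
      ((Complex.I * t * Real.sin θ * e θ) * F θ + e θ * F' θ) θ := by
    intro θ hθ
    rw [huIcc] at hθ
    exact (he θ).mul (hF θ hθ)
  have hintA : IntervalIntegrable (fun θ => (Complex.I * t) * (e θ * ((Real.sin θ : ℂ) * F θ)))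
      MeasureTheory.volume a b := by
    apply ContinuousOn.intervalIntegrable
    rw [huIcc]
    exact (continuousOn_const.mul ((hecont.continuousOn).mul
      (((Complex.continuous_ofReal.comp Real.continuous_sin).continuousOn).mul hFc)))
  have hintB : IntervalIntegrable (fun θ => e θ * F' θ) MeasureTheory.volume a b := by
    apply ContinuousOn.intervalIntegrable
    rw [huIcc]
    exact (hecont.continuousOn).mul hF'c
  have hint : IntervalIntegrable
      (fun θ => (Complex.I * t * Real.sin θ * e θ) * F θ + e θ * F' θ)
      MeasureTheory.volume a b := by
    have := hintA.add hintB
    refine IntervalIntegrable.congr ?_ this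
    intro θ _
    dsimp only
    ring
  have hftc := integral_eq_sub_of_hasDerivAt hderiv hint
  calc (Complex.I * t) * ∫ θ in a..b, e θ * ((Real.sin θ : ℂ) * F θ)
      = ∫ θ in a..b, (Complex.I * t) * (e θ * ((Real.sin θ : ℂ) * F θ)) :=
        (integral_const_mul _ _).symm
    _ = (e b * F b - e a * F a) - ∫ θ in a..b, e θ * F' θ := by
        rw [eq_sub_iff_add_eq, ← integral_add hintA hintB, ← hftc]
        apply integral_congr
        intro θ _
        ring

lemma piece2 (G : ℝ → ℂ) (hG : ContDiff ℝ 2 G) (M : ℝ) (hM : 0 ≤ M)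
    (h0 : ∀ θ ∈ Icc (0:ℝ) π, ‖G θ‖ ≤ M * (min θ (π - θ))^2)
    (h1 : ∀ θ ∈ Icc (0:ℝ) π, ‖deriv G θ‖ ≤ M * min θ (π - θ))
    (h2 : ∀ θ, ‖deriv (deriv G) θ‖ ≤ M)
    (t : ℝ) (htne : t ≠ 0) (δ : ℝ) (hδ0 : 0 < δ) (hδ1 : δ ≤ 1)
    (hδ2 : δ^2 = |t|⁻¹) :
    ‖∫ θ in δ..(π - δ), Complex.exp (-Complex.I * t * Real.cos θ) * G θ‖ ≤
      212 * M * δ^3 := by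
  have hπ3 : (3:ℝ) < π := Real.pi_gt_three
  have hπ4 : π ≤ 4 := by linarith [Real.pi_le_four]
  set a : ℝ := δ with hadef
  set b : ℝ := π - δ with hbdef
  have hab : a ≤ b := by rw [hadef, hbdef]; linarith
  set e : ℝ → ℂ := fun θ => Complex.exp (-Complex.I * t * Real.cos θ) with hedef
  have heno : ∀ θ : ℝ, ‖e θ‖ = 1 := by
    intro θ
    simp only [hedef, Complex.norm_exp]
    have : (-Complex.I * t * Real.cos θ).re = 0 := by simp [Complex.mul_re]
    rw [this, Real.exp_zero]
  -- smoothness of G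
  have hGdiff : Differentiable ℝ G := hG.differentiable (by norm_num)
  have hG'cd : ContDiff ℝ 1 (deriv G) := by
    have h21 : ((2:ℕ) : WithTop ℕ∞) = (1 : WithTop ℕ∞) + 1 := by norm_num
    have := (contDiff_succ_iff_deriv (n := 1)).mp (by rw [← h21]; exact_mod_cast hG)
    exact this.2.2
  have hG'diff : Differentiable ℝ (deriv G) := hG'cd.differentiable (by norm_num)
  have hGc : Continuous G := hG.continuous
  have hG'cont : Continuous (deriv G) := hG'diff.continuous
  have hG''cont : Continuous (deriv (deriv G)) := hG'cd.continuous_deriv le_rfl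
  -- basic facts on [a,b]
  have hfacts : ∀ θ ∈ Icc a b, 0 ≤ θ ∧ θ ≤ π ∧ δ ≤ min θ (π - θ) ∧ min θ (π - θ) ≤ 2 ∧
      min θ (π - θ) / 2 ≤ Real.sin θ := by
    intro θ hθ
    obtain ⟨hθ1, hθ2⟩ := hθ
    rw [hadef] at hθ1; rw [hbdef] at hθ2
    have hθ0 : 0 ≤ θ := by linarith
    have hθπ : θ ≤ π := by linarith
    have hmδ : δ ≤ min θ (π - θ) := le_min hθ1 (by linarith)
    have hm2 : min θ (π - θ) ≤ 2 := by
      rcases le_total θ (π - θ) with h | h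
      · rw [min_eq_left h]; linarith
      · rw [min_eq_right h]; linarith
    exact ⟨hθ0, hθπ, hmδ, hm2, half_min_le_sin hθ0 hθπ⟩
  have hsinpos : ∀ θ ∈ Icc a b, 0 < Real.sin θ := by
    intro θ hθ
    obtain ⟨_, _, hmδ, _, hms⟩ := hfacts θ hθ
    linarith
  have hsne : ∀ θ ∈ Icc a b, ((Real.sin θ : ℂ)) ≠ 0 := by
    intro θ hθ
    exact_mod_cast (hsinpos θ hθ).ne'
  -- the three auxiliary functions
  set u : ℝ → ℂ := fun θ => G θ / (Real.sin θ : ℂ) with hudef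
  set p : ℝ → ℂ := fun θ =>
    (deriv G θ * (Real.sin θ : ℂ) - G θ * (Real.cos θ : ℂ)) / (Real.sin θ : ℂ)^2 with hpdef
  set v : ℝ → ℂ := fun θ =>
    (deriv G θ * (Real.sin θ : ℂ) - G θ * (Real.cos θ : ℂ)) / (Real.sin θ : ℂ)^3 with hvdef
  set w : ℝ → ℂ := fun θ =>
    ((deriv (deriv G) θ + G θ) * (Real.sin θ : ℂ)^2
      - 3 * (Real.cos θ : ℂ) * (deriv G θ * (Real.sin θ : ℂ) - G θ * (Real.cos θ : ℂ)))
      / (Real.sin θ : ℂ)^4 with hwdef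
  -- derivatives
  have hsC : ∀ θ : ℝ, HasDerivAt (fun θ : ℝ => ((Real.sin θ : ℝ) : ℂ)) (Real.cos θ : ℂ) θ :=
    fun θ => (Real.hasDerivAt_sin θ).ofReal_comp
  have hcC : ∀ θ : ℝ, HasDerivAt (fun θ : ℝ => ((Real.cos θ : ℝ) : ℂ)) (-(Real.sin θ : ℂ)) θ := by
    intro θ
    have := (Real.hasDerivAt_cos θ).ofReal_comp
    simpa using this
  have hu : ∀ θ ∈ Icc a b, HasDerivAt u (p θ) θ := by
    intro θ hθ
    exact ((hGdiff θ).hasDerivAt).div (hsC θ) (hsne θ hθ)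
  have hv : ∀ θ ∈ Icc a b, HasDerivAt v (w θ) θ := by
    intro θ hθ
    have hN : HasDerivAt (fun θ => deriv G θ * (Real.sin θ : ℂ) - G θ * (Real.cos θ : ℂ))
        ((deriv (deriv G) θ * (Real.sin θ : ℂ) + deriv G θ * (Real.cos θ : ℂ))
          - (deriv G θ * (Real.cos θ : ℂ) + G θ * (-(Real.sin θ : ℂ)))) θ :=
      (((hG'diff θ).hasDerivAt).mul (hsC θ)).sub (((hGdiff θ).hasDerivAt).mul (hcC θ))
    have hD : HasDerivAt (fun θ : ℝ => (Real.sin θ : ℂ)^3)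
        (3 * (Real.sin θ : ℂ)^2 * (Real.cos θ : ℂ)) θ := by
      have h1 := ((hsC θ).mul (hsC θ)).mul (hsC θ)
      convert h1 using 1
      · rfl
      · funext x; simp only [Pi.mul_apply]; ring
      · simp only [Pi.mul_apply]; ring
    have := hN.div hD (pow_ne_zero 3 (hsne θ hθ))
    refine this.congr_deriv ?_; symm
    have hne := hsne θ hθ
    simp only [hwdef]
    rw [div_eq_div_iff (pow_ne_zero 4 hne) (pow_ne_zero 2 (pow_ne_zero 3 hne))]
    ring
  -- continuity of u, p, v, w on [a,b]
  have hsCcont : Continuous (fun θ : ℝ => ((Real.sin θ : ℝ) : ℂ)) :=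
    Complex.continuous_ofReal.comp Real.continuous_sin
  have hcCcont : Continuous (fun θ : ℝ => ((Real.cos θ : ℝ) : ℂ)) :=
    Complex.continuous_ofReal.comp Real.continuous_cos
  have hucont : ContinuousOn u (Icc a b) :=
    (hGc.continuousOn).div (hsCcont.continuousOn) hsne
  have hNcont : ContinuousOn
      (fun θ => deriv G θ * (Real.sin θ : ℂ) - G θ * (Real.cos θ : ℂ)) (Icc a b) :=
    ((hG'cont.continuousOn).mul (hsCcont.continuousOn)).sub
      ((hGc.continuousOn).mul (hcCcont.continuousOn))
  have hpcont : ContinuousOn p (Icc a b) :=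
    hNcont.div ((hsCcont.pow 2).continuousOn) (fun θ hθ => pow_ne_zero 2 (hsne θ hθ))
  have hvcont : ContinuousOn v (Icc a b) :=
    hNcont.div ((hsCcont.pow 3).continuousOn) (fun θ hθ => pow_ne_zero 3 (hsne θ hθ))
  have hwcont : ContinuousOn w (Icc a b) := by
    apply ContinuousOn.div
    · exact (((hG''cont.continuousOn).add (hGc.continuousOn)).mul
        ((hsCcont.pow 2).continuousOn)).sub
        ((continuousOn_const.mul (hcCcont.continuousOn)).mul hNcont)
    · exact (hsCcont.pow 4).continuousOn
    · exact fun θ hθ => pow_ne_zero 4 (hsne θ hθ)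
  -- two integrations by parts
  have hIt : (Complex.I * (t:ℂ)) ≠ 0 := by
    simp [Complex.I_ne_zero, htne]
  have hibp1 : (Complex.I * t) * ∫ θ in a..b, e θ * G θ =
      (e b * u b - e a * u a) - ∫ θ in a..b, e θ * p θ := by
    have := ibp_aux t a b hab u p hu hucont hpcont
    rw [← this, hedef]
    congr 1
    apply integral_congr
    intro θ hθ
    rw [uIcc_of_le hab] at hθ
    have hne := hsne θ hθ
    simp only [hudef]
    rw [mul_comm ((Real.sin θ : ℂ)) (G θ / _), div_mul_cancel₀ _ hne]
  have hibp2 : (Complex.I * t) * ∫ θ in a..b, e θ * p θ =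
      (e b * v b - e a * v a) - ∫ θ in a..b, e θ * w θ := by
    have := ibp_aux t a b hab v w hv hvcont hwcont
    rw [← this, hedef]
    congr 1
    apply integral_congr
    intro θ hθ
    rw [uIcc_of_le hab] at hθ
    have hne := hsne θ hθ
    show e θ * p θ = e θ * ((Real.sin θ : ℂ) * v θ)
    have hv3 : ((Real.sin θ : ℂ)) * v θ = p θ := by
      simp only [hvdef, hpdef]
      rw [mul_comm, div_mul_eq_mul_div, pow_succ, mul_div_mul_right _ _ hne]
    rw [hv3]
  -- norm bounds
  have hNle : ∀ θ ∈ Icc a b,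
      ‖deriv G θ * (Real.sin θ : ℂ) - G θ * (Real.cos θ : ℂ)‖ ≤ 6 * M * (Real.sin θ)^2 := by
    intro θ hθ
    obtain ⟨hθ0, hθπ, hmδ, hm2, hms⟩ := hfacts θ hθ
    have hsp := hsinpos θ hθ
    have hm0 : 0 < min θ (π - θ) := lt_of_lt_of_le hδ0 hmδ
    have hgn := h0 θ ⟨hθ0, hθπ⟩
    have hg'n := h1 θ ⟨hθ0, hθπ⟩
    have hcos : ‖(Real.cos θ : ℂ)‖ ≤ 1 := by
      rw [Complex.norm_real]
      exact abs_cos_le_one θ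
    have hsin : ‖(Real.sin θ : ℂ)‖ = Real.sin θ := by
      rw [Complex.norm_real, Real.norm_eq_abs, abs_of_pos hsp]
    calc ‖deriv G θ * (Real.sin θ : ℂ) - G θ * (Real.cos θ : ℂ)‖
        ≤ ‖deriv G θ‖ * Real.sin θ + ‖G θ‖ * 1 := by
          refine le_trans (norm_sub_le _ _) ?_
          rw [norm_mul, norm_mul, hsin]
          gcongr
      _ ≤ 6 * M * (Real.sin θ)^2 := by
          nlinarith [mul_nonneg hM (mul_nonneg hsp.le (sub_nonneg.mpr (by linarith :
              min θ (π - θ) ≤ 2 * Real.sin θ))),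
            mul_nonneg (mul_nonneg hM (by linarith : (0:ℝ) ≤ 2 * Real.sin θ + min θ (π - θ)))
              (sub_nonneg.mpr (by linarith : min θ (π - θ) ≤ 2 * Real.sin θ))]
  -- pointwise bounds
  have hbu : ∀ θ ∈ Icc a b, ‖u θ‖ ≤ 2 * M * min θ (π - θ) := by
    intro θ hθ
    obtain ⟨hθ0, hθπ, hmδ, hm2, hms⟩ := hfacts θ hθ
    have hsp := hsinpos θ hθ
    have hm0 : 0 < min θ (π - θ) := lt_of_lt_of_le hδ0 hmδ
    have hgn := h0 θ ⟨hθ0, hθπ⟩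
    have hsin : ‖((Real.sin θ : ℝ) : ℂ)‖ = Real.sin θ := by
      rw [Complex.norm_real, Real.norm_eq_abs, abs_of_pos hsp]
    simp only [hudef]
    rw [norm_div, hsin, div_le_iff₀ hsp]
    nlinarith [mul_nonneg (mul_nonneg hM hm0.le)
      (sub_nonneg.mpr (by linarith : min θ (π - θ) ≤ 2 * Real.sin θ))]
  have hbv : ∀ θ ∈ Icc a b, ‖v θ‖ ≤ 12 * M / δ := by
    intro θ hθ
    obtain ⟨hθ0, hθπ, hmδ, hm2, hms⟩ := hfacts θ hθ
    have hsp := hsinpos θ hθ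
    have hN := hNle θ hθ
    simp only [hvdef]
    rw [norm_div, norm_pow, Complex.norm_real, Real.norm_eq_abs, abs_of_pos hsp,
      div_le_div_iff₀ (by positivity) hδ0]
    have hδs : δ ≤ 2 * Real.sin θ := by linarith
    nlinarith [mul_nonneg (sub_nonneg.mpr hN) hδ0.le,
      mul_nonneg (mul_nonneg (by linarith : (0:ℝ) ≤ 6*M) (sq_nonneg (Real.sin θ)))
        (sub_nonneg.mpr hδs)]
  have hbw : ∀ θ ∈ Icc a b, ‖w θ‖ ≤ 92 * M * ((θ^2)⁻¹ + ((π - θ)^2)⁻¹) := by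
    intro θ hθ
    obtain ⟨hθ0, hθπ, hmδ, hm2, hms⟩ := hfacts θ hθ
    have hsp := hsinpos θ hθ
    have hm0 : 0 < min θ (π - θ) := lt_of_lt_of_le hδ0 hmδ
    have hθpos : 0 < θ := lt_of_lt_of_le hm0 (min_le_left _ _)
    have hπθpos : 0 < π - θ := lt_of_lt_of_le hm0 (min_le_right _ _)
    have hN := hNle θ hθ
    have hgn := h0 θ ⟨hθ0, hθπ⟩
    have hg2 := h2 θ
    have hs2 : ‖((Real.sin θ : ℝ) : ℂ)^2‖ = (Real.sin θ)^2 := by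
      rw [norm_pow, Complex.norm_real, Real.norm_eq_abs, abs_of_pos hsp]
    have hA : ‖deriv (deriv G) θ + G θ‖ ≤ 5 * M := by
      refine le_trans (norm_add_le _ _) ?_
      have hG4 : ‖G θ‖ ≤ 4 * M := by
        nlinarith [mul_nonneg (mul_nonneg hM (sub_nonneg.mpr hm2))
          (by linarith : (0:ℝ) ≤ 2 + min θ (π - θ))]
      linarith
    have hB : ‖(3:ℂ) * ((Real.cos θ : ℝ) : ℂ)‖ ≤ 3 := by
      rw [norm_mul, Complex.norm_real, Real.norm_eq_abs]
      have h3 : ‖(3:ℂ)‖ = 3 := by norm_num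
      rw [h3]
      nlinarith [abs_cos_le_one θ, abs_nonneg (Real.cos θ)]
    have hWn : ‖(deriv (deriv G) θ + G θ) * ((Real.sin θ : ℝ) : ℂ)^2
        - 3 * ((Real.cos θ : ℝ) : ℂ) * (deriv G θ * ((Real.sin θ : ℝ) : ℂ)
          - G θ * ((Real.cos θ : ℝ) : ℂ))‖ ≤ 23 * M * (Real.sin θ)^2 := by
      refine le_trans (norm_sub_le _ _) ?_
      rw [norm_mul, norm_mul, hs2]
      have t1 : ‖deriv (deriv G) θ + G θ‖ * (Real.sin θ)^2 ≤ 5*M*(Real.sin θ)^2 :=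
        mul_le_mul_of_nonneg_right hA (sq_nonneg _)
      have t2 : ‖(3:ℂ) * ((Real.cos θ : ℝ) : ℂ)‖ *
          ‖deriv G θ * ((Real.sin θ : ℝ) : ℂ) - G θ * ((Real.cos θ : ℝ) : ℂ)‖
          ≤ 3 * (6 * M * (Real.sin θ)^2) :=
        mul_le_mul hB hN (norm_nonneg _) (by norm_num)
      linarith
    have hw1 : ‖w θ‖ ≤ 23 * M / (Real.sin θ)^2 := by
      simp only [hwdef]
      rw [norm_div]
      have hs4 : ‖((Real.sin θ : ℝ) : ℂ)^4‖ = (Real.sin θ)^4 := by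
        rw [norm_pow, Complex.norm_real, Real.norm_eq_abs, abs_of_pos hsp]
      rw [hs4, div_le_div_iff₀ (by positivity) (by positivity)]
      calc ‖(deriv (deriv G) θ + G θ) * ((Real.sin θ : ℝ) : ℂ)^2
          - 3 * ((Real.cos θ : ℝ) : ℂ) * (deriv G θ * ((Real.sin θ : ℝ) : ℂ)
            - G θ * ((Real.cos θ : ℝ) : ℂ))‖ * (Real.sin θ)^2
          ≤ (23 * M * (Real.sin θ)^2) * (Real.sin θ)^2 :=
            mul_le_mul_of_nonneg_right hWn (sq_nonneg _)
        _ = 23 * M * (Real.sin θ)^4 := by ring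
    have hw2 : (23:ℝ) * M / (Real.sin θ)^2 ≤ 92 * M / (min θ (π - θ))^2 := by
      rw [div_le_div_iff₀ (by positivity) (by positivity)]
      nlinarith [mul_le_mul_of_nonneg_left
        (mul_le_mul (by linarith : min θ (π - θ) ≤ 2 * Real.sin θ)
          (by linarith : min θ (π - θ) ≤ 2 * Real.sin θ) hm0.le (by linarith)) hM]
    have hw3 : (92:ℝ) * M / (min θ (π - θ))^2 ≤ 92 * M * ((θ^2)⁻¹ + ((π - θ)^2)⁻¹) := by
      have hy : (0:ℝ) ≤ 92*M*((π - θ)^2)⁻¹ := by positivity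
      have hx : (0:ℝ) ≤ 92*M*(θ^2)⁻¹ := by positivity
      rcases le_total θ (π - θ) with h | h
      · rw [min_eq_left h, div_eq_mul_inv]
        linarith
      · rw [min_eq_right h, div_eq_mul_inv]
        linarith
    linarith
  -- endpoint values
  have haIcc : a ∈ Icc a b := ⟨le_rfl, hab⟩
  have hbIcc : b ∈ Icc a b := ⟨hab, le_rfl⟩
  have hma : min a (π - a) = δ := by
    rw [hadef, min_eq_left]; linarith
  have hmb : min b (π - b) = δ := by
    rw [hbdef]
    have : π - (π - δ) = δ := by ring
    rw [this, min_eq_right]; linarith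
  have hua : ‖u a‖ ≤ 2 * M * δ := by have := hbu a haIcc; rwa [hma] at this
  have hub : ‖u b‖ ≤ 2 * M * δ := by have := hbu b hbIcc; rwa [hmb] at this
  have hva : ‖v a‖ ≤ 12 * M / δ := hbv a haIcc
  have hvb : ‖v b‖ ≤ 12 * M / δ := hbv b hbIcc
  -- integral of the w bound
  have hb0 : 0 < b := by rw [hbdef]; linarith
  have hπa : 0 < π - a := by rw [hadef]; linarith
  have hne0 : ∀ θ ∈ Icc a b, θ ≠ 0 := fun θ hθ => (lt_of_lt_of_le hδ0 hθ.1).ne'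
  have hneπ : ∀ θ ∈ Icc a b, π - θ ≠ 0 := by
    intro θ hθ
    have := hθ.2
    rw [hbdef] at this
    have : 0 < π - θ := by linarith
    exact this.ne'
  have hint1c : IntervalIntegrable (fun θ : ℝ => (θ^2)⁻¹) MeasureTheory.volume a b := by
    apply ContinuousOn.intervalIntegrable
    rw [uIcc_of_le hab]
    exact ((continuous_pow 2).continuousOn).inv₀ fun θ hθ => pow_ne_zero 2 (hne0 θ hθ)
  have hint2c : IntervalIntegrable (fun θ : ℝ => ((π - θ)^2)⁻¹) MeasureTheory.volume a b := by
    apply ContinuousOn.intervalIntegrable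
    rw [uIcc_of_le hab]
    exact (((continuous_const.sub continuous_id).pow 2).continuousOn).inv₀
      fun θ hθ => pow_ne_zero 2 (hneπ θ hθ)
  have hint1 : ∫ θ in a..b, (θ^2)⁻¹ = a⁻¹ - b⁻¹ := by
    have hd : ∀ θ ∈ uIcc a b, HasDerivAt (fun x : ℝ => -x⁻¹) ((θ^2)⁻¹) θ := by
      intro θ hθ
      rw [uIcc_of_le hab] at hθ
      exact ((hasDerivAt_inv (hne0 θ hθ)).neg).congr_deriv (neg_neg _)
    rw [integral_eq_sub_of_hasDerivAt hd hint1c]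
    ring
  have hint2 : ∫ θ in a..b, ((π - θ)^2)⁻¹ = (π - b)⁻¹ - (π - a)⁻¹ := by
    have hd : ∀ θ ∈ uIcc a b, HasDerivAt (fun x : ℝ => (π - x)⁻¹) (((π - θ)^2)⁻¹) θ := by
      intro θ hθ
      rw [uIcc_of_le hab] at hθ
      have inner : HasDerivAt (fun x : ℝ => π - x) (-1) θ := (hasDerivAt_id θ).const_sub π
      have houter := hasDerivAt_inv (hneπ θ hθ)
      have := houter.comp θ inner
      refine this.congr_deriv ?_
      ring
    rw [integral_eq_sub_of_hasDerivAt hd hint2c]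
  have hwint0 : IntervalIntegrable (fun θ => ‖w θ‖) MeasureTheory.volume a b := by
    apply ContinuousOn.intervalIntegrable
    rw [uIcc_of_le hab]
    exact hwcont.norm
  have hrint : IntervalIntegrable (fun θ : ℝ => 92 * M * ((θ^2)⁻¹ + ((π - θ)^2)⁻¹))
      MeasureTheory.volume a b := by
    apply IntervalIntegrable.const_mul
    exact hint1c.add hint2c
  have hwint : ∫ θ in a..b, ‖w θ‖ ≤ 184 * M / δ := by
    have hmono := integral_mono_on hab hwint0 hrint hbw
    refine le_trans hmono ?_
    have hcm : ∫ θ in a..b, 92 * M * ((θ^2)⁻¹ + ((π - θ)^2)⁻¹) =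
        92 * M * ((a⁻¹ - b⁻¹) + ((π - b)⁻¹ - (π - a)⁻¹)) := by
      rw [integral_const_mul, integral_add hint1c hint2c, hint1, hint2]
    rw [hcm]
    have h1 : (0:ℝ) < b⁻¹ := inv_pos.mpr hb0
    have h2 : (0:ℝ) < (π - a)⁻¹ := inv_pos.mpr hπa
    have h3 : π - b = δ := by rw [hbdef]; ring
    rw [h3, hadef, div_eq_mul_inv]
    nlinarith [mul_nonneg hM h1.le, mul_nonneg hM h2.le]
  -- assembly
  have habs_t : ‖(Complex.I * (t:ℂ))‖ = |t| := by
    rw [norm_mul, Complex.norm_I, one_mul, Complex.norm_real, Real.norm_eq_abs]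
  have htinv : (0:ℝ) ≤ |t|⁻¹ := inv_nonneg.mpr (abs_nonneg t)
  have hEp : ‖∫ θ in a..b, e θ * p θ‖ ≤ |t|⁻¹ * (12*M/δ + 12*M/δ + 184*M/δ) := by
    have heq : ∫ θ in a..b, e θ * p θ =
        (Complex.I * t)⁻¹ * ((e b * v b - e a * v a) - ∫ θ in a..b, e θ * w θ) := by
      rw [← hibp2, inv_mul_cancel_left₀ hIt]
    rw [heq, norm_mul, norm_inv, habs_t]
    refine mul_le_mul_of_nonneg_left ?_ htinv
    refine le_trans (norm_sub_le _ _) ?_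
    have hone : ‖e b * v b - e a * v a‖ ≤ 12*M/δ + 12*M/δ := by
      refine le_trans (norm_sub_le _ _) ?_
      rw [norm_mul, norm_mul, heno, heno, one_mul, one_mul]
      exact add_le_add hvb hva
    have htwo : ‖∫ θ in a..b, e θ * w θ‖ ≤ 184*M/δ := by
      refine le_trans (intervalIntegral.norm_integral_le_integral_norm hab) ?_
      have hcg : ∫ θ in a..b, ‖e θ * w θ‖ = ∫ θ in a..b, ‖w θ‖ := by
        apply integral_congr
        intro θ _
        show ‖e θ * w θ‖ = ‖w θ‖
        rw [norm_mul, heno, one_mul]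
      rw [hcg]
      exact hwint
    linarith
  have heqm : ∫ θ in a..b, e θ * G θ =
      (Complex.I * t)⁻¹ * ((e b * u b - e a * u a) - ∫ θ in a..b, e θ * p θ) := by
    rw [← hibp1, inv_mul_cancel_left₀ hIt]
  rw [heqm, norm_mul, norm_inv, habs_t]
  have hfin : ‖(e b * u b - e a * u a) - ∫ θ in a..b, e θ * p θ‖ ≤
      (2*M*δ + 2*M*δ) + |t|⁻¹ * (12*M/δ + 12*M/δ + 184*M/δ) := by
    refine le_trans (norm_sub_le _ _) ?_
    have hone : ‖e b * u b - e a * u a‖ ≤ 2*M*δ + 2*M*δ := by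
      refine le_trans (norm_sub_le _ _) ?_
      rw [norm_mul, norm_mul, heno, heno, one_mul, one_mul]
      exact add_le_add hub hua
    linarith
  calc |t|⁻¹ * ‖(e b * u b - e a * u a) - ∫ θ in a..b, e θ * p θ‖
      ≤ |t|⁻¹ * ((2*M*δ + 2*M*δ) + |t|⁻¹ * (12*M/δ + 12*M/δ + 184*M/δ)) :=
        mul_le_mul_of_nonneg_left hfin htinv
    _ = δ^2 * ((2*M*δ + 2*M*δ) + δ^2 * (12*M/δ + 12*M/δ + 184*M/δ)) := by rw [← hδ2]
    _ = 212 * M * δ^3 := by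
        field_simp
        ring

lemma key_s8 (G : ℝ → ℂ) (hG : ContDiff ℝ 2 G) (M : ℝ) (hM : 0 ≤ M)
    (h0 : ∀ θ ∈ Icc (0:ℝ) π, ‖G θ‖ ≤ M * (min θ (π - θ))^2)
    (h1 : ∀ θ ∈ Icc (0:ℝ) π, ‖deriv G θ‖ ≤ M * min θ (π - θ))
    (h2 : ∀ θ, ‖deriv (deriv G) θ‖ ≤ M)
    (t : ℝ) (ht : 1 ≤ |t|) :
    ‖∫ θ in (0:ℝ)..π, Complex.exp (-Complex.I * t * Real.cos θ) * G θ‖ ≤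
      300 * M * |t| ^ (-(3:ℝ)/2) := by
  have ht0 : (0:ℝ) < |t| := lt_of_lt_of_le one_pos ht
  have htne : (t:ℝ) ≠ 0 := by simpa [abs_ne_zero] using ht0.ne'
  set δ : ℝ := |t| ^ (-(1:ℝ)/2) with hδdef
  have hδ0 : 0 < δ := Real.rpow_pos_of_pos ht0 _
  have hδ1 : δ ≤ 1 := Real.rpow_le_one_of_one_le_of_nonpos ht (by norm_num)
  have hδ3 : δ^3 = |t| ^ (-(3:ℝ)/2) := by
    rw [hδdef, ← Real.rpow_natCast (|t| ^ (-(1:ℝ)/2)) 3, ← Real.rpow_mul (abs_nonneg t)]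
    norm_num
  have hδ2 : δ^2 = |t|⁻¹ := by
    rw [hδdef, ← Real.rpow_natCast (|t| ^ (-(1:ℝ)/2)) 2, ← Real.rpow_mul (abs_nonneg t)]
    norm_num [Real.rpow_neg_one]
  have hπ3 : (3:ℝ) < π := Real.pi_gt_three
  set a : ℝ := δ
  set b : ℝ := π - δ
  have hab : a ≤ b := by simp only [a, b]; linarith
  have ha0 : 0 < a := hδ0
  have hbπ : b < π := by simp only [b]; linarith
  -- the phase
  set e : ℝ → ℂ := fun θ => Complex.exp (-Complex.I * t * Real.cos θ) with hedef
  have he : ∀ θ : ℝ, HasDerivAt e (Complex.I * t * Real.sin θ * e θ) θ := by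
    intro θ
    have hc : HasDerivAt (fun θ : ℝ => ((Real.cos θ : ℝ) : ℂ)) (-Real.sin θ : ℝ) θ :=
      (Real.hasDerivAt_cos θ).ofReal_comp
    have := ((hc.const_mul (-Complex.I * t)).cexp)
    convert this using 1
    rw [hedef]
    push_cast
    ring_nf
  have heno : ∀ θ : ℝ, ‖e θ‖ = 1 := by
    intro θ
    simp only [hedef, Complex.norm_exp]
    have : (-Complex.I * t * Real.cos θ).re = 0 := by simp [Complex.mul_re]
    rw [this, Real.exp_zero]
  have hecont : Continuous e := by
    apply Complex.continuous_exp.comp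
    continuity
  have hGc : Continuous G := hG.continuous
  have hintEG : ∀ x y : ℝ, IntervalIntegrable (fun θ => e θ * G θ) MeasureTheory.volume x y :=
    fun x y => (hecont.mul hGc).intervalIntegrable x y
  -- split the integral
  have hsplit : ∫ θ in (0:ℝ)..π, e θ * G θ =
      (∫ θ in (0:ℝ)..a, e θ * G θ) + (∫ θ in a..b, e θ * G θ) + (∫ θ in b..π, e θ * G θ) := by
    rw [← integral_add_adjacent_intervals (hintEG 0 a) (hintEG a π),
      ← integral_add_adjacent_intervals (hintEG a b) (hintEG b π)]
    ring
  -- piece 1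
  have hpiece1 : ‖∫ θ in (0:ℝ)..a, e θ * G θ‖ ≤ M * δ^3 := by
    have : ∀ x ∈ Set.uIoc (0:ℝ) a, ‖e x * G x‖ ≤ M * δ^2 := by
      intro x hx
      rw [Set.uIoc_of_le ha0.le] at hx
      have hx0 : 0 ≤ x := hx.1.le
      have hxδ : x ≤ δ := hx.2
      have hxπ : x ≤ π := by linarith
      have hmin0 : 0 ≤ min x (π - x) := le_min hx0 (by linarith)
      have := h0 x ⟨hx0, hxπ⟩
      rw [norm_mul, heno, one_mul]
      refine le_trans this ?_
      have : min x (π - x) ≤ δ := le_trans (min_le_left _ _) hxδ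
      exact mul_le_mul_of_nonneg_left (pow_le_pow_left₀ hmin0 this 2) hM
    have := intervalIntegral.norm_integral_le_of_norm_le_const this
    rw [sub_zero] at this
    calc ‖∫ θ in (0:ℝ)..a, e θ * G θ‖ ≤ M * δ^2 * |a| := this
      _ = M * δ^3 := by rw [abs_of_pos ha0]; ring
  -- piece 3
  have hpiece3 : ‖∫ θ in b..π, e θ * G θ‖ ≤ M * δ^3 := by
    have : ∀ x ∈ Set.uIoc b π, ‖e x * G x‖ ≤ M * δ^2 := by
      intro x hx
      rw [Set.uIoc_of_le hbπ.le] at hx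
      have hx0 : 0 ≤ x := by have := hx.1; simp only [b] at this; linarith
      have hxδ : π - x ≤ δ := by have := hx.1; simp only [b] at this; linarith
      have hxπ : x ≤ π := hx.2
      have hmin0 : 0 ≤ min x (π - x) := le_min hx0 (by linarith)
      have := h0 x ⟨hx0, hxπ⟩
      rw [norm_mul, heno, one_mul]
      refine le_trans this ?_
      have : min x (π - x) ≤ δ := le_trans (min_le_right _ _) hxδ
      exact mul_le_mul_of_nonneg_left (pow_le_pow_left₀ hmin0 this 2) hM
    have := intervalIntegral.norm_integral_le_of_norm_le_const this
    calc ‖∫ θ in b..π, e θ * G θ‖ ≤ M * δ^2 * |π - b| := this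
      _ = M * δ^3 := by simp only [b]; rw [abs_of_pos (by linarith : (0:ℝ) < π - (π - δ))]; ring
  -- piece 2
  have hpiece2 : ‖∫ θ in a..b, e θ * G θ‖ ≤ 212 * M * δ^3 :=
    piece2 G hG M hM h0 h1 h2 t htne δ hδ0 hδ1 hδ2
  calc ‖∫ θ in (0:ℝ)..π, e θ * G θ‖
      ≤ ‖∫ θ in (0:ℝ)..a, e θ * G θ‖ + ‖∫ θ in a..b, e θ * G θ‖ + ‖∫ θ in b..π, e θ * G θ‖ := by
        rw [hsplit]; exact le_trans (norm_add_le _ _) (by gcongr; exact norm_add_le _ _)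
    _ ≤ M * δ^3 + 212 * M * δ^3 + M * δ^3 := by gcongr
    _ ≤ 300 * M * δ^3 := by nlinarith [pow_pos hδ0 3]
    _ = 300 * M * |t| ^ (-(3:ℝ)/2) := by rw [hδ3]

lemma taylor_bound (G : ℝ → ℂ) (hG : ContDiff ℝ 2 G) (M : ℝ)
    (hM : ∀ θ, ‖deriv (deriv G) θ‖ ≤ M)
    (hG0 : G 0 = 0) (hG'0 : deriv G 0 = 0) (hGπ : G π = 0) (hG'π : deriv G π = 0) :
    (∀ θ ∈ Icc (0:ℝ) π, ‖deriv G θ‖ ≤ M * min θ (π - θ)) ∧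
    (∀ θ ∈ Icc (0:ℝ) π, ‖G θ‖ ≤ M * (min θ (π - θ))^2) := by
  have hπ0 : (0:ℝ) < π := Real.pi_pos
  have hGdiff : Differentiable ℝ G := hG.differentiable (by norm_num)
  have hG'cd : ContDiff ℝ 1 (deriv G) := by
    have h21 : ((2:ℕ) : WithTop ℕ∞) = (1 : WithTop ℕ∞) + 1 := by norm_num
    exact ((contDiff_succ_iff_deriv (n := 1)).mp (by rw [← h21]; exact_mod_cast hG)).2.2
  have hG'diff : Differentiable ℝ (deriv G) := hG'cd.differentiable (by norm_num)
  -- step A : ‖G' θ‖ ≤ M θ on [0, π]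
  have stepA : ∀ θ ∈ Icc (0:ℝ) π, ‖deriv G θ‖ ≤ M * θ := by
    intro θ hθ
    have := norm_image_sub_le_of_norm_deriv_le_segment'
      (f := deriv G) (f' := deriv (deriv G)) (a := 0) (b := π) (C := M)
      (fun x _ => ((hG'diff x).hasDerivAt).hasDerivWithinAt)
      (fun x _ => hM x) θ hθ
    simpa [hG'0] using this
  -- step B : ‖G' θ‖ ≤ M (π - θ) on [0, π]
  have stepB : ∀ θ ∈ Icc (0:ℝ) π, ‖deriv G θ‖ ≤ M * (π - θ) := by
    intro θ hθ
    have hrev : ∀ x ∈ Icc (0:ℝ) π,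
        HasDerivWithinAt (fun x => deriv G (π - x)) (-(deriv (deriv G) (π - x))) (Icc 0 π) x := by
      intro x _
      have inner : HasDerivAt (fun x : ℝ => π - x) (-1) x := (hasDerivAt_id x).const_sub π
      have := ((hG'diff (π - x)).hasDerivAt).scomp x inner
      simpa [Function.comp_def] using this.hasDerivWithinAt
    have := norm_image_sub_le_of_norm_deriv_le_segment'
      (f := fun x => deriv G (π - x)) (f' := fun x => -(deriv (deriv G) (π - x)))
      (a := 0) (b := π) (C := M) hrev
      (fun x _ => by simpa using hM (π - x)) (π - θ) ⟨by linarith [hθ.2], by linarith [hθ.1]⟩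
    simp only [sub_zero, sub_sub_cancel, hG'π] at this
    simpa using this
  -- step C : ‖G θ‖ ≤ M θ² on [0, π]
  have stepC : ∀ θ ∈ Icc (0:ℝ) π, ‖G θ‖ ≤ M * θ^2 := by
    intro θ hθ
    have hsub : Icc (0:ℝ) θ ⊆ Icc (0:ℝ) π := Icc_subset_Icc le_rfl hθ.2
    have := norm_image_sub_le_of_norm_deriv_le_segment'
      (f := G) (f' := deriv G) (a := 0) (b := θ) (C := M * θ)
      (fun x _ => ((hGdiff x).hasDerivAt).hasDerivWithinAt)
      (fun x hx => by
        have hx' : x ∈ Icc (0:ℝ) π := hsub ⟨hx.1, hx.2.le⟩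
        have := stepA x hx'
        have hM0 : 0 ≤ M := le_trans (norm_nonneg _) (hM 0)
        nlinarith [hx.2.le, hx.1])
      θ ⟨hθ.1, le_rfl⟩
    simp only [hG0, sub_zero] at this
    calc ‖G θ‖ ≤ M * θ * θ := this
      _ = M * θ^2 := by ring
  -- step D : ‖G θ‖ ≤ M (π-θ)² on [0, π]
  have stepD : ∀ θ ∈ Icc (0:ℝ) π, ‖G θ‖ ≤ M * (π - θ)^2 := by
    intro θ hθ
    have := norm_image_sub_le_of_norm_deriv_le_segment'
      (f := fun x => G (π - x)) (f' := fun x => -(deriv G (π - x)))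
      (a := 0) (b := π - θ) (C := M * (π - θ))
      (fun x hx => by
        have inner : HasDerivAt (fun x : ℝ => π - x) (-1) x := (hasDerivAt_id x).const_sub π
        have := ((hGdiff (π - x)).hasDerivAt).scomp x inner
        simpa [Function.comp_def] using this.hasDerivWithinAt)
      (fun x hx => by
        have hx' : π - x ∈ Icc (0:ℝ) π := ⟨by linarith [hx.2, hθ.1], by linarith [hx.1]⟩
        have := stepB (π - x) hx'
        have hM0 : 0 ≤ M := le_trans (norm_nonneg _) (hM 0)
        rw [norm_neg]
        have h2 : π - (π - x) = x := by ring
        rw [h2] at this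
        nlinarith [hx.2.le, hx.1])
      (π - θ) ⟨by linarith [hθ.2], le_rfl⟩
    simp only [sub_zero, sub_sub_cancel, hGπ] at this
    calc ‖G θ‖ ≤ M * (π - θ) * (π - θ) := by simpa using this
      _ = M * (π - θ)^2 := by ring
  constructor
  · intro θ hθ
    rcases le_total θ (π - θ) with h | h
    · rw [min_eq_left h]; exact stepA θ hθ
    · rw [min_eq_right h]; exact stepB θ hθ
  · intro θ hθ
    rcases le_total θ (π - θ) with h | h
    · rw [min_eq_left h]; exact stepC θ hθ
    · rw [min_eq_right h]; exact stepD θ hθ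

/-- Improved stationary-phase estimate (`d = 2`): there is `C > 0`
such that for every `2π`-periodic `C³` function `g : ℝ → ℂ` vanishing at the stationary
points `θ = 0` and `θ = π` of the phase `cos θ`, and every `t ∈ ℝ`,
`|∫₀^{2π} e^{-it cos θ} g(θ) dθ| ≤ C (1+|t|)^{-3/2} Σ_{m=0}^{3} sup |g^{(m)}|`. -/
theorem statement8 :
    ∃ C : ℝ, 0 < C ∧ ∀ g : ℝ → ℂ, Function.Periodic g (2 * π) → ContDiff ℝ 3 g →
      g 0 = 0 → g π = 0 →
      ∀ t : ℝ,
        ‖∫ θ in (0 : ℝ)..(2 * π), Complex.exp (-Complex.I * t * Real.cos θ) * g θ‖ ≤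
          C * (1 + |t|) ^ (-(3 : ℝ) / 2) *
            ∑ m ∈ Finset.range 4, ⨆ θ : ℝ, ‖iteratedDeriv m g θ‖ := by
  refine ⟨3000, by norm_num, ?_⟩
  intro g hper hg3 hg0 hgπ t
  have hπ0 : (0:ℝ) < π := Real.pi_pos
  have hπ3 : (3:ℝ) < π := Real.pi_gt_three
  have hπ4 : π ≤ 4 := by linarith [Real.pi_le_four]
  -- suprema of the derivatives
  set Mm : ℕ → ℝ := fun m => ⨆ θ : ℝ, ‖iteratedDeriv m g θ‖ with hMmdef
  have hperit : ∀ m, Function.Periodic (iteratedDeriv m g) (2*π) := by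
    intro m
    induction m with
    | zero => simpa [iteratedDeriv_zero] using hper
    | succ n ih => rw [iteratedDeriv_succ]; exact periodic_deriv' ih
  have hle : ∀ m : ℕ, m ≤ 3 → ∀ θ : ℝ, ‖iteratedDeriv m g θ‖ ≤ Mm m := by
    intro m hm θ
    exact le_ciSup (bdd_of_periodic_cont
      (hg3.continuous_iteratedDeriv m (by exact_mod_cast hm)) (hperit m)) θ
  have hnn : ∀ m : ℕ, m ≤ 3 → 0 ≤ Mm m := fun m hm =>
    le_trans (norm_nonneg _) (hle m hm 0)
  set S : ℝ := ∑ m ∈ Finset.range 4, Mm m with hSdef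
  have hS0 : Mm 0 ≤ S := Finset.single_le_sum
    (fun i hi => hnn i (by simpa using Nat.lt_succ_iff.mp (Finset.mem_range.mp hi)))
    (by norm_num)
  have hS2 : Mm 2 ≤ S := Finset.single_le_sum
    (fun i hi => hnn i (by simpa using Nat.lt_succ_iff.mp (Finset.mem_range.mp hi)))
    (by norm_num)
  have hSnn : 0 ≤ S := le_trans (hnn 0 (by norm_num)) hS0
  -- the folded function
  set G : ℝ → ℂ := fun θ => g θ + g (-θ) with hGdef
  have hGcd : ContDiff ℝ 2 G :=
    (hg3.of_le (by norm_num)).add ((hg3.of_le (by norm_num)).comp (contDiff_id.neg))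
  have hgd : Differentiable ℝ g := hg3.differentiable (by norm_num)
  have hg'cd : ContDiff ℝ 2 (deriv g) := by
    have h31 : ((3:ℕ) : WithTop ℕ∞) = (2 : WithTop ℕ∞) + 1 := by norm_num
    exact ((contDiff_succ_iff_deriv (n := 2)).mp (by rw [← h31]; exact_mod_cast hg3)).2.2
  have hg'd : Differentiable ℝ (deriv g) := hg'cd.differentiable (by norm_num)
  have hGd1 : ∀ θ : ℝ, HasDerivAt G (deriv g θ - deriv g (-θ)) θ := by
    intro θ
    have h1 := (hgd θ).hasDerivAt
    have h2 : HasDerivAt (fun θ : ℝ => g (-θ)) (-(deriv g (-θ))) θ := by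
      have := ((hgd (-θ)).hasDerivAt).scomp θ (hasDerivAt_neg θ)
      simpa [Function.comp_def] using this
    have := h1.add h2; rw [sub_eq_add_neg]; exact this
  have hdGeq : deriv G = fun θ => deriv g θ - deriv g (-θ) :=
    funext fun θ => (hGd1 θ).deriv
  have hG2 : ∀ θ : ℝ, deriv (deriv G) θ = deriv (deriv g) θ + deriv (deriv g) (-θ) := by
    intro θ
    rw [hdGeq]
    have h1 := (hg'd θ).hasDerivAt
    have h2 : HasDerivAt (fun θ : ℝ => deriv g (-θ)) (-(deriv (deriv g) (-θ))) θ := by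
      have := ((hg'd (-θ)).hasDerivAt).scomp θ (hasDerivAt_neg θ)
      simpa [Function.comp_def] using this
    have := (h1.sub h2).deriv
    exact this.trans (by ring)
  -- values at the stationary points
  have hG0 : G 0 = 0 := by simp [hGdef, hg0]
  have hgneg : g (-π) = g π := by
    have := hper (-π)
    rw [show -π + 2*π = π by ring] at this
    exact this.symm
  have hGπ : G π = 0 := by simp [hGdef, hgneg, hgπ]
  have hG'0 : deriv G 0 = 0 := by rw [hdGeq]; simp
  have hG'π : deriv G π = 0 := by
    rw [hdGeq]
    have hperd := periodic_deriv' hper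
    have := hperd (-π)
    rw [show -π + 2*π = π by ring] at this
    simp [this.symm]
  -- second-derivative bound
  have hit2 : iteratedDeriv 2 g = deriv (deriv g) := by
    rw [iteratedDeriv_succ, iteratedDeriv_succ, iteratedDeriv_zero]
  have hG''le : ∀ θ : ℝ, ‖deriv (deriv G) θ‖ ≤ 2 * Mm 2 := by
    intro θ
    rw [hG2 θ]
    refine le_trans (norm_add_le _ _) ?_
    have h1 := hle 2 (by norm_num) θ
    have h2 := hle 2 (by norm_num) (-θ)
    rw [hit2] at h1 h2
    linarith
  obtain ⟨hT1, hT0⟩ := taylor_bound G hGcd (2 * Mm 2) hG''le hG0 hG'0 hGπ hG'π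
  have hM2nn : 0 ≤ 2 * Mm 2 := by linarith [hnn 2 (by norm_num)]
  -- the phase and folding
  set e : ℝ → ℂ := fun θ => Complex.exp (-Complex.I * t * Real.cos θ) with hedef
  have hecont : Continuous e := by
    apply Complex.continuous_exp.comp
    continuity
  have heno : ∀ θ : ℝ, ‖e θ‖ = 1 := by
    intro θ
    simp only [hedef, Complex.norm_exp]
    have : (-Complex.I * t * Real.cos θ).re = 0 := by simp [Complex.mul_re]
    rw [this, Real.exp_zero]
  have hgc : Continuous g := hg3.continuous
  have hfold : ∫ θ in (0:ℝ)..(2*π), e θ * g θ = ∫ θ in (0:ℝ)..π, e θ * G θ := by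
    have hint : ∀ x y : ℝ, IntervalIntegrable (fun θ => e θ * g θ) MeasureTheory.volume x y :=
      fun x y => (hecont.mul hgc).intervalIntegrable x y
    have hsplit := integral_add_adjacent_intervals (hint 0 π) (hint π (2*π))
    have hsub : ∫ θ in π..(2*π), e θ * g θ =
        ∫ θ in (0:ℝ)..π, e (2*π - θ) * g (2*π - θ) := by
      rw [intervalIntegral.integral_comp_sub_left (fun θ => e θ * g θ) (2*π)]
      norm_num
      rw [show 2*π - π = π by ring]
    have hcongr : ∀ θ : ℝ, e θ * g θ + e (2*π - θ) * g (2*π - θ) = e θ * G θ := by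
      intro θ
      have hcos : Real.cos (2*π - θ) = Real.cos θ := by
        rw [Real.cos_sub]; simp
      have hgs : g (2*π - θ) = g (-θ) := by
        rw [show 2*π - θ = -θ + 2*π by ring, hper (-θ)]
      simp only [hedef, hGdef, hcos, hgs]
      ring
    have hint2 : IntervalIntegrable (fun θ => e (2*π - θ) * g (2*π - θ))
        MeasureTheory.volume 0 π := by
      apply Continuous.intervalIntegrable
      exact ((hecont.comp (continuous_const.sub continuous_id)).mul
        (hgc.comp (continuous_const.sub continuous_id)))
    calc ∫ θ in (0:ℝ)..(2*π), e θ * g θ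
        = (∫ θ in (0:ℝ)..π, e θ * g θ) + ∫ θ in π..(2*π), e θ * g θ := hsplit.symm
      _ = (∫ θ in (0:ℝ)..π, e θ * g θ) +
          ∫ θ in (0:ℝ)..π, e (2*π - θ) * g (2*π - θ) := by rw [hsub]
      _ = ∫ θ in (0:ℝ)..π, (e θ * g θ + e (2*π - θ) * g (2*π - θ)) := by
          rw [← integral_add (hint 0 π) hint2]
      _ = ∫ θ in (0:ℝ)..π, e θ * G θ := by
          apply integral_congr
          intro θ _
          exact hcongr θ
  -- rpow comparison facts
  have h24 : (2:ℝ)^(-2:ℝ) = 1/4 := by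
    rw [show (-2:ℝ) = ((-2:ℤ):ℝ) by norm_num, Real.rpow_intCast]
    norm_num
  have h2pow : (1:ℝ)/4 ≤ (2:ℝ) ^ (-(3:ℝ)/2) := by
    rw [← h24]
    exact Real.rpow_le_rpow_of_exponent_le one_le_two (by norm_num)
  rw [hfold]
  rcases le_or_gt |t| 1 with hsmall | hbig
  · -- small |t|
    have hb1 : (2:ℝ) ^ (-(3:ℝ)/2) ≤ (1 + |t|) ^ (-(3:ℝ)/2) :=
      Real.rpow_le_rpow_of_nonpos (by positivity) (by linarith [abs_nonneg t]) (by norm_num)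
    have hb : (1:ℝ)/4 ≤ (1 + |t|) ^ (-(3:ℝ)/2) := le_trans h2pow hb1
    have hbnd : ∀ x ∈ Set.uIoc (0:ℝ) π, ‖e x * G x‖ ≤ 2 * Mm 0 := by
      intro x _
      rw [norm_mul, heno, one_mul]
      have h1 := hle 0 (by norm_num) x
      have h2 := hle 0 (by norm_num) (-x)
      rw [iteratedDeriv_zero] at h1 h2
      simp only [hGdef]
      refine le_trans (norm_add_le _ _) ?_
      linarith
    have := intervalIntegral.norm_integral_le_of_norm_le_const hbnd
    rw [sub_zero, abs_of_pos hπ0] at this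
    calc ‖∫ θ in (0:ℝ)..π, e θ * G θ‖ ≤ 2 * Mm 0 * π := this
      _ ≤ 8 * Mm 0 := by nlinarith [hnn 0 (by norm_num : (0:ℕ) ≤ 3)]
      _ ≤ 3000 * (1/4) * S := by nlinarith [hnn 0 (by norm_num : (0:ℕ) ≤ 3)]
      _ ≤ 3000 * (1 + |t|) ^ (-(3:ℝ)/2) * S := by nlinarith
  · -- large |t|
    have hkey := key_s8 G hGcd (2 * Mm 2) hM2nn hT0 hT1 hG''le t hbig.le
    have habs0 : (0:ℝ) < |t| := by linarith
    have hc1 : (2*|t|) ^ (-(3:ℝ)/2) ≤ (1 + |t|) ^ (-(3:ℝ)/2) :=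
      Real.rpow_le_rpow_of_nonpos (by positivity) (by linarith) (by norm_num)
    have hc2 : (2*|t|) ^ (-(3:ℝ)/2) = (2:ℝ)^(-(3:ℝ)/2) * |t|^(-(3:ℝ)/2) :=
      Real.mul_rpow (by norm_num) (abs_nonneg t)
    have htp : (0:ℝ) < |t|^(-(3:ℝ)/2) := Real.rpow_pos_of_pos habs0 _
    have hc3 : (1/4) * |t|^(-(3:ℝ)/2) ≤ (1 + |t|) ^ (-(3:ℝ)/2) := by
      refine le_trans ?_ hc1
      rw [hc2]
      exact mul_le_mul_of_nonneg_right h2pow htp.le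
    calc ‖∫ θ in (0:ℝ)..π, e θ * G θ‖ ≤ 300 * (2 * Mm 2) * |t|^(-(3:ℝ)/2) := hkey
      _ = 600 * Mm 2 * |t|^(-(3:ℝ)/2) := by ring
      _ ≤ 3000 * ((1/4) * |t|^(-(3:ℝ)/2)) * S := by
          nlinarith [hnn 2 (by norm_num : (2:ℕ) ≤ 3), mul_le_mul_of_nonneg_right hS2 htp.le]
      _ ≤ 3000 * (1 + |t|) ^ (-(3:ℝ)/2) * S := by
          have h3 := mul_le_mul_of_nonneg_right hc3 hSnn
          nlinarith
end

section
/- Fix ν ≥ 0, ψ̄ ≥ 0, k > 0, and ι ∈ {+1, −1}. Let h : ℝ × [0,∞) → ℂ be a classical solution, 2π-periodic in θ, of ∂_t h(θ,t) + i k cos θ · h(θ,t) + 2 ι ψ̄ cos θ sin θ · a(t) = ν ∂²_θ h(θ,t), where a(t) = ∫₀^{2π} cos φ sin φ · h(φ,t) dφ. Then the function t ↦ ‖h(·,t)‖² = ∫₀^{2π} |h(θ,t)|² dθ is differentiable on (0,∞) and satisfies (1/2) d/dt ‖h(·,t)‖² = −ν ∫₀^{2π} |∂_θ h(θ,t)|²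 dθ − 2 ι ψ̄ |a(t)|². In particular, in the puller case ι = +1 the L² norm ‖h(·,t)‖ is nonincreasing in t. -/
open Real MeasureTheory intervalIntegral

lemma hasDerivAt_norm_sq_comp {z : ℝ → ℂ} {z' : ℂ} {t : ℝ} (hz : HasDerivAt z z' t) :
    HasDerivAt (fun s => ‖z s‖ ^ 2) (2 * ((starRingEnd ℂ) (z t) * z').re) t := by
  have hre : HasDerivAt (fun s => (z s).re) z'.re t :=
    Complex.reCLM.hasFDerivAt.comp_hasDerivAt t hz
  have him : HasDerivAt (fun s => (z s).im) z'.im t :=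
    Complex.imCLM.hasFDerivAt.comp_hasDerivAt t hz
  have h2 := (hre.mul hre).add (him.mul him)
  have heq : (fun s => ‖z s‖ ^ 2) = fun s => (z s).re * (z s).re + (z s).im * (z s).im := by
    funext s
    rw [Complex.sq_norm, Complex.normSq_apply]
  rw [heq]
  refine (h2 : HasDerivAt (fun s => (z s).re * (z s).re + (z s).im * (z s).im) _ t).congr_deriv ?_
  simp [Complex.mul_re, Complex.conj_re, Complex.conj_im]
  ring

lemma intervalIntegral_re' {f : ℝ → ℂ} {a b : ℝ} (hf : IntervalIntegrable f volume a b) :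
    ∫ x in a..b, (f x).re = (∫ x in a..b, f x).re :=
  Complex.reCLM.intervalIntegral_comp_comm hf

lemma intervalIntegral_conj' {f : ℝ → ℂ} {a b : ℝ} (hf : IntervalIntegrable f volume a b) :
    ∫ x in a..b, (starRingEnd ℂ) (f x) = (starRingEnd ℂ) (∫ x in a..b, f x) :=
  (Complex.conjCLE.toContinuousLinearMap : ℂ →L[ℝ] ℂ).intervalIntegral_comp_comm hf

set_option maxHeartbeats 1000000 in
/-- Mode-by-mode linearized H-theorem in dimension `d = 2`:
for a classical, `2π`-periodic-in-`θ` solution of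
`∂_t h + i k cos θ · h + 2 ι ψ̄ cos θ sin θ · a(t) = ν ∂²_θ h`,
`a(t) = ∫₀^{2π} cos φ sin φ h(φ,t) dφ`, the `L²` norm satisfies
`(1/2) d/dt ‖h(·,t)‖² = −ν ∫ |∂_θ h|² − 2 ι ψ̄ |a(t)|²`; in particular for pullers
(`ι = +1`) the `L²` norm is nonincreasing. -/
theorem statement10 (ν ψ k ι : ℝ) (hν : 0 ≤ ν) (hψ : 0 ≤ ψ) (hk : 0 < k)
    (hι : ι = 1 ∨ ι = -1)
    (h dht dhθ dhθθ : ℝ → ℝ → ℂ)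
    (hper : ∀ t, 0 ≤ t → Function.Periodic (fun θ => h θ t) (2 * π))
    (hcont : ContinuousOn (Function.uncurry h) {p : ℝ × ℝ | 0 ≤ p.2})
    (hcont_t : ContinuousOn (Function.uncurry dht) {p : ℝ × ℝ | 0 ≤ p.2})
    (hcont_θ : ContinuousOn (Function.uncurry dhθ) {p : ℝ × ℝ | 0 ≤ p.2})
    (hcont_θθ : ContinuousOn (Function.uncurry dhθθ) {p : ℝ × ℝ | 0 ≤ p.2})
    (hd_t : ∀ θ t, 0 ≤ t → HasDerivWithinAt (fun s => h θ s) (dht θ t) (Set.Ici 0) t)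
    (hd_θ : ∀ θ t, 0 ≤ t → HasDerivAt (fun φ => h φ t) (dhθ θ t) θ)
    (hd_θθ : ∀ θ t, 0 ≤ t → HasDerivAt (fun φ => dhθ φ t) (dhθθ θ t) θ)
    (hpde : ∀ θ t, 0 ≤ t →
      dht θ t + Complex.I * k * (Real.cos θ : ℂ) * h θ t +
          2 * (ι : ℂ) * (ψ : ℂ) * (Real.cos θ : ℂ) * (Real.sin θ : ℂ) *
            (∫ φ in (0 : ℝ)..(2 * π), (Real.cos φ : ℂ) * (Real.sin φ : ℂ) * h φ t) =
        (ν : ℂ) * dhθθ θ t) :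
    (∀ t, 0 < t →
        HasDerivAt (fun s => ∫ θ in (0 : ℝ)..(2 * π), ‖h θ s‖ ^ 2)
          (2 * (-ν * (∫ θ in (0 : ℝ)..(2 * π), ‖dhθ θ t‖ ^ 2) -
            2 * ι * ψ *
              ‖∫ φ in (0 : ℝ)..(2 * π), (Real.cos φ : ℂ) * (Real.sin φ : ℂ) * h φ t‖ ^ 2)) t) ∧
      (ι = 1 → ∀ s t, 0 ≤ s → s ≤ t →
        (∫ θ in (0 : ℝ)..(2 * π), ‖h θ t‖ ^ 2) ≤ ∫ θ in (0 : ℝ)..(2 * π), ‖h θ s‖ ^ 2) := by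
  -- continuity in θ for fixed time
  have contθ_h : ∀ t, 0 ≤ t → Continuous (fun θ => h θ t) := fun t ht =>
    continuous_iff_continuousAt.2 fun θ => (hd_θ θ t ht).continuousAt
  have contθ_dhθ : ∀ t, 0 ≤ t → Continuous (fun θ => dhθ θ t) := fun t ht =>
    continuous_iff_continuousAt.2 fun θ => (hd_θθ θ t ht).continuousAt
  have contθ_dht : ∀ t, 0 ≤ t → Continuous (fun θ => dht θ t) := by
    intro t ht
    exact hcont_t.comp_continuous (continuous_id.prodMk continuous_const) fun θ => ht
  have contθ_dhθθ : ∀ t, 0 ≤ t → Continuous (fun θ => dhθθ θ t) := by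
    intro t ht
    exact hcont_θθ.comp_continuous (continuous_id.prodMk continuous_const) fun θ => ht
  -- periodicity of dhθ
  have hdθper : ∀ t, 0 ≤ t → dhθ (2 * π) t = dhθ 0 t := by
    intro t ht
    have h0 := hd_θ 0 t ht
    have h0' : HasDerivAt (fun φ => h φ t) (dhθ 0 t) (2 * π - 2 * π) := by
      simpa using h0
    have hcomp : HasDerivAt (fun φ : ℝ => h (φ - 2 * π) t) (dhθ 0 t) (2 * π) :=
      HasDerivAt.comp_sub_const (2 * π) (2 * π) h0'

    have heqf : (fun φ : ℝ => h (φ - 2 * π) t) = fun φ => h φ t := by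
      funext φ
      have := hper t ht (φ - 2 * π)
      simpa using this.symm
    rw [heqf] at hcomp
    exact (hd_θ (2 * π) t ht).unique hcomp
  -- shorthand
  set a : ℝ → ℂ := fun t =>
    ∫ φ in (0 : ℝ)..(2 * π), (Real.cos φ : ℂ) * (Real.sin φ : ℂ) * h φ t with ha
  -- continuity of auxiliary integrands
  have contconj : ∀ t, 0 ≤ t → Continuous (fun θ => (starRingEnd ℂ) (h θ t)) := by
    intro t ht
    exact (RCLike.continuous_conj (K := ℂ)).comp (contθ_h t ht)
  have contconjθ : ∀ t, 0 ≤ t → Continuous (fun θ => (starRingEnd ℂ) (dhθ θ t)) := by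
    intro t ht
    exact (RCLike.continuous_conj (K := ℂ)).comp (contθ_dhθ t ht)
  -- key integral identity
  have keyId : ∀ t, 0 ≤ t →
      (∫ θ in (0 : ℝ)..(2 * π), 2 * ((starRingEnd ℂ) (h θ t) * dht θ t).re)
        = 2 * (-ν * (∫ θ in (0 : ℝ)..(2 * π), ‖dhθ θ t‖ ^ 2) - 2 * ι * ψ * ‖a t‖ ^ 2) := by
    intro t ht
    -- integration by parts
    have hibp : (∫ θ in (0 : ℝ)..(2 * π), (starRingEnd ℂ) (h θ t) * dhθθ θ t)
        = (starRingEnd ℂ) (h (2 * π) t) * dhθ (2 * π) t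
            - (starRingEnd ℂ) (h 0 t) * dhθ 0 t
            - ∫ θ in (0 : ℝ)..(2 * π), (starRingEnd ℂ) (dhθ θ t) * dhθ θ t := by
      refine intervalIntegral.integral_mul_deriv_eq_deriv_mul
        (fun x _ => ?_) (fun x _ => hd_θθ x t ht)
        ((contconjθ t ht).intervalIntegrable _ _)
        ((contθ_dhθθ t ht).intervalIntegrable _ _)
      exact (hd_θ x t ht).star
    have hbdry : (starRingEnd ℂ) (h (2 * π) t) * dhθ (2 * π) t
        - (starRingEnd ℂ) (h 0 t) * dhθ 0 t = 0 := by
      have h1 : h (2 * π) t = h 0 t := by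
        have := hper t ht 0
        simpa using this
      rw [h1, hdθper t ht]
      ring
    have hconjmul : ∀ z : ℂ, (starRingEnd ℂ) z * z = ((‖z‖ ^ 2 : ℝ) : ℂ) := by
      intro z
      rw [mul_comm, Complex.mul_conj, Complex.normSq_eq_norm_sq]
    have hibp2 : (∫ θ in (0 : ℝ)..(2 * π), (starRingEnd ℂ) (h θ t) * dhθθ θ t)
        = -(((∫ θ in (0 : ℝ)..(2 * π), ‖dhθ θ t‖ ^ 2 : ℝ) : ℂ)) := by
      rw [hibp, hbdry, zero_sub]
      congr 1
      rw [← intervalIntegral.integral_ofReal]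
      exact intervalIntegral.integral_congr fun θ _ => hconjmul (dhθ θ t)
    -- the conjugate of a t
    have ccs : Continuous fun θ : ℝ => (Real.cos θ : ℂ) * (Real.sin θ : ℂ) :=
      (Complex.continuous_ofReal.comp Real.continuous_cos).mul
        (Complex.continuous_ofReal.comp Real.continuous_sin)
    have cint : Continuous fun θ : ℝ => (Real.cos θ : ℂ) * (Real.sin θ : ℂ) * h θ t :=
      ccs.mul (contθ_h t ht)
    have haconj : (∫ θ in (0 : ℝ)..(2 * π),
        (Real.cos θ : ℂ) * (Real.sin θ : ℂ) * (starRingEnd ℂ) (h θ t))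
        = (starRingEnd ℂ) (a t) := by
      rw [ha]
      rw [← intervalIntegral_conj'
        (f := fun θ => (Real.cos θ : ℂ) * (Real.sin θ : ℂ) * h θ t)
        (cint.intervalIntegrable _ _)]
      refine intervalIntegral.integral_congr fun θ _ => ?_
      rw [map_mul, map_mul, Complex.conj_ofReal, Complex.conj_ofReal]
    -- pointwise use of the PDE
    have hpt : ∀ θ, 2 * ((starRingEnd ℂ) (h θ t) * dht θ t).re
        = 2 * ν * ((starRingEnd ℂ) (h θ t) * dhθθ θ t).re
          - 4 * ι * ψ *
            (((Real.cos θ : ℂ) * (Real.sin θ : ℂ) * (starRingEnd ℂ) (h θ t)) * a t).re := by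
      intro θ
      have hdht : dht θ t = (ν : ℂ) * dhθθ θ t - Complex.I * k * (Real.cos θ : ℂ) * h θ t
          - 2 * (ι : ℂ) * (ψ : ℂ) * (Real.cos θ : ℂ) * (Real.sin θ : ℂ) * a t := by
        rw [ha]
        linear_combination (hpde θ t ht)
      rw [hdht]
      simp only [Complex.mul_re, Complex.mul_im, Complex.sub_re, Complex.sub_im,
        Complex.ofReal_re, Complex.ofReal_im, Complex.I_re, Complex.I_im,
        Complex.conj_re, Complex.conj_im, Complex.re_ofNat, Complex.im_ofNat]
      ring
    -- integrate the pointwise identity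
    have c1 : Continuous fun θ => ((starRingEnd ℂ) (h θ t) * dhθθ θ t).re :=
      Complex.continuous_re.comp ((contconj t ht).mul (contθ_dhθθ t ht))
    have c2C : Continuous fun θ =>
        ((Real.cos θ : ℂ) * (Real.sin θ : ℂ) * (starRingEnd ℂ) (h θ t)) * a t :=
      (ccs.mul (contconj t ht)).mul continuous_const
    have c2 : Continuous fun θ =>
        (((Real.cos θ : ℂ) * (Real.sin θ : ℂ) * (starRingEnd ℂ) (h θ t)) * a t).re :=
      Complex.continuous_re.comp c2C
    calc (∫ θ in (0 : ℝ)..(2 * π), 2 * ((starRingEnd ℂ) (h θ t) * dht θ t).re)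
        = ∫ θ in (0 : ℝ)..(2 * π),
            (2 * ν * ((starRingEnd ℂ) (h θ t) * dhθθ θ t).re
              - 4 * ι * ψ *
              (((Real.cos θ : ℂ) * (Real.sin θ : ℂ) * (starRingEnd ℂ) (h θ t)) * a t).re) :=
          intervalIntegral.integral_congr fun θ _ => hpt θ
      _ = 2 * ν * (∫ θ in (0 : ℝ)..(2 * π), ((starRingEnd ℂ) (h θ t) * dhθθ θ t).re)
            - 4 * ι * ψ * ∫ θ in (0 : ℝ)..(2 * π),
              (((Real.cos θ : ℂ) * (Real.sin θ : ℂ) * (starRingEnd ℂ) (h θ t)) * a t).re := by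
          rw [intervalIntegral.integral_sub
            (f := fun θ => 2 * ν * ((starRingEnd ℂ) (h θ t) * dhθθ θ t).re)
            (g := fun θ => 4 * ι * ψ *
              (((Real.cos θ : ℂ) * (Real.sin θ : ℂ) * (starRingEnd ℂ) (h θ t)) * a t).re)
            ((continuous_const.mul c1).intervalIntegrable _ _)
            ((continuous_const.mul c2).intervalIntegrable _ _),
            intervalIntegral.integral_const_mul, intervalIntegral.integral_const_mul]
      _ = 2 * (-ν * (∫ θ in (0 : ℝ)..(2 * π), ‖dhθ θ t‖ ^ 2) - 2 * ι * ψ * ‖a t‖ ^ 2) := by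
          have e1 : (∫ θ in (0 : ℝ)..(2 * π), ((starRingEnd ℂ) (h θ t) * dhθθ θ t).re)
              = -(∫ θ in (0 : ℝ)..(2 * π), ‖dhθ θ t‖ ^ 2) := by
            rw [intervalIntegral_re' (f := fun θ => (starRingEnd ℂ) (h θ t) * dhθθ θ t)
              (((contconj t ht).mul (contθ_dhθθ t ht)).intervalIntegrable _ _),
              hibp2]
            simp
          have e2 : (∫ θ in (0 : ℝ)..(2 * π),
              (((Real.cos θ : ℂ) * (Real.sin θ : ℂ) * (starRingEnd ℂ) (h θ t)) * a t).re)
              = ‖a t‖ ^ 2 := by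
            rw [intervalIntegral_re'
              (f := fun θ => ((Real.cos θ : ℂ) * (Real.sin θ : ℂ) * (starRingEnd ℂ) (h θ t)) * a t)
              (c2C.intervalIntegrable _ _),
              intervalIntegral.integral_mul_const, haconj, hconjmul (a t), Complex.ofReal_re]
          rw [e1, e2]
          ring
  -- Part 1: derivative of the L² norm
  have part1 : ∀ t, 0 < t →
      HasDerivAt (fun s => ∫ θ in (0 : ℝ)..(2 * π), ‖h θ s‖ ^ 2)
        (2 * (-ν * (∫ θ in (0 : ℝ)..(2 * π), ‖dhθ θ t‖ ^ 2) - 2 * ι * ψ * ‖a t‖ ^ 2)) t := by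
    intro t ht
    have hε : (0 : ℝ) < t / 2 := by linarith
    set K : Set (ℝ × ℝ) := Set.Icc 0 (2 * π) ×ˢ Set.Icc (t / 2) (t + t / 2) with hK
    have hKc : IsCompact K := isCompact_Icc.prod isCompact_Icc
    have hKsub : K ⊆ {p : ℝ × ℝ | 0 ≤ p.2} := by
      rintro ⟨θ, s⟩ ⟨-, hs⟩
      have := hs.1
      show (0 : ℝ) ≤ s
      linarith
    obtain ⟨C1, hC1⟩ := hKc.exists_bound_of_continuousOn (hcont.mono hKsub)
    obtain ⟨C2, hC2⟩ := hKc.exists_bound_of_continuousOn (hcont_t.mono hKsub)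
    have hball : ∀ x ∈ Metric.ball t (t / 2), 0 < x ∧ x ∈ Set.Icc (t / 2) (t + t / 2) := by
      intro x hx
      rw [Metric.mem_ball, Real.dist_eq, abs_lt] at hx
      exact ⟨by linarith [hx.1], ⟨by linarith [hx.1], by linarith [hx.2]⟩⟩
    have hmeas : ∀ᶠ x in nhds t, AEStronglyMeasurable (fun θ => ‖h θ x‖ ^ 2)
        (volume.restrict (Set.uIoc 0 (2 * π))) := by
      filter_upwards [Ioi_mem_nhds ht] with x hx
      exact ((contθ_h x (le_of_lt hx)).norm.pow 2).aestronglyMeasurable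
    have hint : IntervalIntegrable (fun θ => ‖h θ t‖ ^ 2) volume 0 (2 * π) :=
      ((contθ_h t ht.le).norm.pow 2).intervalIntegrable _ _
    have hmeas' : AEStronglyMeasurable
        (fun θ => 2 * ((starRingEnd ℂ) (h θ t) * dht θ t).re)
        (volume.restrict (Set.uIoc 0 (2 * π))) :=
      (continuous_const.mul (Complex.continuous_re.comp
        ((contconj t ht.le).mul (contθ_dht t ht.le)))).aestronglyMeasurable
    have hbound : ∀ᵐ θ ∂volume, θ ∈ Set.uIoc 0 (2 * π) →
        ∀ x ∈ Metric.ball t (t / 2),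
          ‖2 * ((starRingEnd ℂ) (h θ x) * dht θ x).re‖ ≤ 2 * (|C1| * |C2|) := by
      refine MeasureTheory.ae_of_all _ fun θ hθ x hx => ?_
      obtain ⟨hx0, hxI⟩ := hball x hx
      have hθI : θ ∈ Set.Icc 0 (2 * π) := by
        rw [Set.uIoc_of_le (by positivity : (0 : ℝ) ≤ 2 * π)] at hθ
        exact ⟨hθ.1.le, hθ.2⟩
      have hmem : (θ, x) ∈ K := ⟨hθI, hxI⟩
      have b1 : ‖h θ x‖ ≤ |C1| := (hC1 _ hmem).trans (le_abs_self _)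
      have b2 : ‖dht θ x‖ ≤ |C2| := (hC2 _ hmem).trans (le_abs_self _)
      have hre : |((starRingEnd ℂ) (h θ x) * dht θ x).re| ≤ ‖h θ x‖ * ‖dht θ x‖ := by
        calc |((starRingEnd ℂ) (h θ x) * dht θ x).re|
            ≤ ‖(starRingEnd ℂ) (h θ x) * dht θ x‖ := Complex.abs_re_le_norm _
          _ = ‖h θ x‖ * ‖dht θ x‖ := by
              rw [norm_mul, Complex.norm_conj]
      have hnn : (0 : ℝ) ≤ ‖dht θ x‖ := norm_nonneg _
      have hnn2 : (0 : ℝ) ≤ ‖h θ x‖ := norm_nonneg _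
      have : ‖h θ x‖ * ‖dht θ x‖ ≤ |C1| * |C2| :=
        mul_le_mul b1 b2 hnn ((norm_nonneg _).trans b1)
      rw [norm_mul, Real.norm_ofNat, Real.norm_eq_abs]
      nlinarith
    have hbint : IntervalIntegrable (fun _ : ℝ => 2 * (|C1| * |C2|)) volume 0 (2 * π) :=
      intervalIntegrable_const
    have hdiff : ∀ᵐ θ ∂volume, θ ∈ Set.uIoc 0 (2 * π) →
        ∀ x ∈ Metric.ball t (t / 2),
          HasDerivAt (fun x => ‖h θ x‖ ^ 2)
            (2 * ((starRingEnd ℂ) (h θ x) * dht θ x).re) x := by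
      refine MeasureTheory.ae_of_all _ fun θ _ x hx => ?_
      obtain ⟨hx0, -⟩ := hball x hx
      exact hasDerivAt_norm_sq_comp ((hd_t θ x hx0.le).hasDerivAt (Ici_mem_nhds hx0))
    have key := intervalIntegral.hasDerivAt_integral_of_dominated_loc_of_deriv_le
      (F := fun x θ => ‖h θ x‖ ^ 2)
      (F' := fun x θ => 2 * ((starRingEnd ℂ) (h θ x) * dht θ x).re)
      (bound := fun _ => 2 * (|C1| * |C2|)) (Metric.ball_mem_nhds t hε) hmeas hint hmeas' hbound hbint hdiff
    have hfinal := key.2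
    rw [keyId t ht.le] at hfinal
    exact hfinal
  refine ⟨part1, ?_⟩
  -- Part 2: monotonicity for pullers
  intro hι1 s t hs hst
  have hcontE : ContinuousOn (fun s => ∫ θ in (0 : ℝ)..(2 * π), ‖h θ s‖ ^ 2) (Set.Ici 0) := by
    have hmap : Continuous fun p : ℝ × ℝ => ((p.2, max p.1 0) : ℝ × ℝ) :=
      continuous_snd.prodMk (continuous_fst.max continuous_const)
    have hHc0 : Continuous fun p : ℝ × ℝ => h p.2 (max p.1 0) :=
      hcont.comp_continuous hmap fun p => show (0 : ℝ) ≤ max p.1 0 from le_max_right _ _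
    have hHc : Continuous (Function.uncurry fun (x θ : ℝ) => ‖h θ (max x 0)‖ ^ 2) :=
      hHc0.norm.pow 2
    have hcE : Continuous fun x => ∫ θ in (0 : ℝ)..(2 * π), ‖h θ (max x 0)‖ ^ 2 :=
      intervalIntegral.continuous_parametric_intervalIntegral_of_continuous' hHc 0 (2 * π)
    refine hcE.continuousOn.congr fun x hx => ?_
    have : max x 0 = x := max_eq_left hx
    simp only [this]
  have hAnti : AntitoneOn (fun s => ∫ θ in (0 : ℝ)..(2 * π), ‖h θ s‖ ^ 2) (Set.Ici 0) := by
    refine antitoneOn_of_deriv_nonpos (convex_Ici 0) hcontE ?_ ?_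
    · intro x hx
      rw [interior_Ici] at hx
      exact (part1 x hx).differentiableAt.differentiableWithinAt
    · intro x hx
      rw [interior_Ici] at hx
      rw [(part1 x hx).deriv]
      have hA0 : 0 ≤ ∫ θ in (0 : ℝ)..(2 * π), ‖dhθ θ x‖ ^ 2 :=
        intervalIntegral.integral_nonneg (by positivity) fun u _ => by positivity
      have hB0 : (0 : ℝ) ≤ ‖a x‖ ^ 2 := by positivity
      rw [hι1]
      nlinarith [mul_nonneg hν hA0, mul_nonneg hψ hB0]
  exact hAnti (Set.mem_Ici.2 hs) (Set.mem_Ici.2 (hs.trans hst)) hst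
end

section
/- There exists a constant C > 0 such that for every 2π-periodic continuously differentiable function h : ℝ → ℂ and every δ ∈ (0, 1/2), one has ∫₀^{2π} |h(θ)|² dθ ≤ C ( δ^{−1} ∫₀^{2π} sin²θ |h(θ)|² dθ + δ ∫₀^{2π} |h′(θ)|² dθ ). -/
open Real MeasureTheory intervalIntegral

/-- Poincaré-type inequality on the unit circle: there is `C > 0`
such that for every `2π`-periodic `C¹` function `h : ℝ → ℂ` and every `δ ∈ (0, 1/2)`,
`∫₀^{2π} |h|² ≤ C (δ⁻¹ ∫₀^{2π} sin²θ |h|² + δ ∫₀^{2π} |h'|²)`. -/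
theorem statement18 :
    ∃ C : ℝ, 0 < C ∧
      ∀ h : ℝ → ℂ, Function.Periodic h (2 * π) → ContDiff ℝ 1 h →
      ∀ δ : ℝ, 0 < δ → δ < 1 / 2 →
        (∫ θ in (0 : ℝ)..(2 * π), ‖h θ‖ ^ 2) ≤
          C * (δ⁻¹ * (∫ θ in (0 : ℝ)..(2 * π), Real.sin θ ^ 2 * ‖h θ‖ ^ 2) +
            δ * ∫ θ in (0 : ℝ)..(2 * π), ‖deriv h θ‖ ^ 2) := by
  refine ⟨2, by norm_num, ?_⟩
  intro h _hper hC1 δ hδ hδ2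
  have hd : Differentiable ℝ h := hC1.differentiable one_ne_zero
  have hc : Continuous h := hC1.continuous
  have hc' : Continuous (deriv h) := (hC1.iterate_deriv' 0 1).continuous
  set F' : ℝ → ℝ := fun θ => 2 * (inner ℝ (h θ) (deriv h θ) : ℝ) with hF'
  have hFd : ∀ x : ℝ, HasDerivAt (fun θ => ‖h θ‖ ^ 2) (F' x) x :=
    fun x => ((hd x).hasDerivAt).norm_sq
  have hFc : Continuous (fun θ => ‖h θ‖ ^ 2) := hc.norm.pow 2
  have hF'c : Continuous F' :=
    continuous_const.mul ((continuous_inner.comp (hc.prodMk hc')))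
  have hud : ∀ x : ℝ, HasDerivAt (fun θ => Real.sin θ * Real.cos θ)
      (Real.cos x * Real.cos x + Real.sin x * (-Real.sin x)) x :=
    fun x => (Real.hasDerivAt_sin x).mul (Real.hasDerivAt_cos x)
  have hIBP : (∫ θ in (0:ℝ)..(2*π), (Real.sin θ * Real.cos θ) * F' θ)
      = - ∫ θ in (0:ℝ)..(2*π),
          (Real.cos θ * Real.cos θ + Real.sin θ * (-Real.sin θ)) * ‖h θ‖ ^ 2 := by
    rw [intervalIntegral.integral_mul_deriv_eq_deriv_mul
      (fun x _ => hud x) (fun x _ => hFd x)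
      (((continuous_cos.mul continuous_cos).add
        (continuous_sin.mul continuous_sin.neg)).intervalIntegrable _ _)
      (hF'c.intervalIntegrable _ _)]
    simp [Real.sin_two_pi]
  have hsplit : (∫ θ in (0:ℝ)..(2*π), ‖h θ‖ ^ 2)
      = (∫ θ in (0:ℝ)..(2*π), 2 * (Real.sin θ ^ 2 * ‖h θ‖ ^ 2))
        - ∫ θ in (0:ℝ)..(2*π), (Real.sin θ * Real.cos θ) * F' θ := by
    rw [hIBP, sub_neg_eq_add,
      ← intervalIntegral.integral_add (f := fun θ => 2 * (Real.sin θ ^ 2 * ‖h θ‖ ^ 2))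
        (g := fun θ => (Real.cos θ * Real.cos θ + Real.sin θ * (-Real.sin θ)) * ‖h θ‖ ^ 2)
        ((continuous_const.mul ((continuous_sin.pow 2).mul hFc)).intervalIntegrable _ _)
        ((((continuous_cos.mul continuous_cos).add
          (continuous_sin.mul continuous_sin.neg)).mul hFc).intervalIntegrable _ _)]
    apply intervalIntegral.integral_congr
    intro x _
    show ‖h x‖ ^ 2 = 2 * (Real.sin x ^ 2 * ‖h x‖ ^ 2)
      + (Real.cos x * Real.cos x + Real.sin x * (-Real.sin x)) * ‖h x‖ ^ 2
    nlinarith [Real.sin_sq_add_cos_sq x]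
  -- pointwise bound on the (negated) cross term
  have hpt : ∀ x : ℝ, -((Real.sin x * Real.cos x) * F' x)
      ≤ δ⁻¹ * (Real.sin x ^ 2 * ‖h x‖ ^ 2) + δ * ‖deriv h x‖ ^ 2 := by
    intro x
    have h1 : |(inner ℝ (h x) (deriv h x) : ℝ)| ≤ ‖h x‖ * ‖deriv h x‖ :=
      abs_real_inner_le_norm _ _
    have hs : |Real.sin x| ≤ 1 := Real.abs_sin_le_one x
    have hcx : |Real.cos x| ≤ 1 := Real.abs_cos_le_one x
    have key : -((Real.sin x * Real.cos x) * F' x)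
        ≤ 2 * ((|Real.sin x| * ‖h x‖) * ‖deriv h x‖) := by
      calc -((Real.sin x * Real.cos x) * F' x) ≤ |(Real.sin x * Real.cos x) * F' x| :=
            neg_le_abs _
        _ = |Real.sin x| * |Real.cos x| * (2 * |(inner ℝ (h x) (deriv h x) : ℝ)|) := by
            rw [abs_mul, abs_mul, hF', abs_mul]
            simp [abs_of_nonneg, mul_comm, mul_assoc, mul_left_comm]
        _ ≤ |Real.sin x| * 1 * (2 * (‖h x‖ * ‖deriv h x‖)) := by
            apply mul_le_mul
            · exact mul_le_mul_of_nonneg_left hcx (abs_nonneg _)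
            · nlinarith [abs_nonneg ((inner ℝ (h x) (deriv h x) : ℝ))]
            · positivity
            · positivity
        _ = 2 * ((|Real.sin x| * ‖h x‖) * ‖deriv h x‖) := by ring
    have h2 : δ * (-((Real.sin x * Real.cos x) * F' x))
        ≤ Real.sin x ^ 2 * ‖h x‖ ^ 2 + δ ^ 2 * ‖deriv h x‖ ^ 2 := by
      nlinarith [sq_nonneg (|Real.sin x| * ‖h x‖ - δ * ‖deriv h x‖), sq_abs (Real.sin x),
        mul_le_mul_of_nonneg_left key hδ.le, abs_nonneg (Real.sin x), norm_nonneg (h x),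
        norm_nonneg (deriv h x)]
    calc -((Real.sin x * Real.cos x) * F' x)
        = δ⁻¹ * (δ * (-((Real.sin x * Real.cos x) * F' x))) := by
          field_simp
      _ ≤ δ⁻¹ * (Real.sin x ^ 2 * ‖h x‖ ^ 2 + δ ^ 2 * ‖deriv h x‖ ^ 2) :=
          mul_le_mul_of_nonneg_left h2 (inv_nonneg.mpr hδ.le)
      _ = δ⁻¹ * (Real.sin x ^ 2 * ‖h x‖ ^ 2) + δ * ‖deriv h x‖ ^ 2 := by
          field_simp
  have hint : (∫ θ in (0:ℝ)..(2*π), -((Real.sin θ * Real.cos θ) * F' θ))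
      ≤ ∫ θ in (0:ℝ)..(2*π),
          (δ⁻¹ * (Real.sin θ ^ 2 * ‖h θ‖ ^ 2) + δ * ‖deriv h θ‖ ^ 2) := by
    apply intervalIntegral.integral_mono_on (by positivity)
    · exact (((continuous_sin.mul continuous_cos).mul hF'c).neg).intervalIntegrable _ _
    · exact ((continuous_const.mul ((continuous_sin.pow 2).mul hFc)).add
        (continuous_const.mul ((hc'.norm.pow 2)))).intervalIntegrable _ _
    · exact fun x _ => hpt x
  rw [intervalIntegral.integral_neg] at hint
  have hA : IntervalIntegrable (fun θ => Real.sin θ ^ 2 * ‖h θ‖ ^ 2) volume 0 (2*π) :=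
    ((continuous_sin.pow 2).mul hFc).intervalIntegrable _ _
  have hB : IntervalIntegrable (fun θ => ‖deriv h θ‖ ^ 2) volume 0 (2*π) :=
    (hc'.norm.pow 2).intervalIntegrable _ _
  have hApos : 0 ≤ ∫ θ in (0:ℝ)..(2*π), Real.sin θ ^ 2 * ‖h θ‖ ^ 2 := by
    apply intervalIntegral.integral_nonneg (by positivity)
    intro x _; positivity
  have hBpos : 0 ≤ ∫ θ in (0:ℝ)..(2*π), ‖deriv h θ‖ ^ 2 := by
    apply intervalIntegral.integral_nonneg (by positivity)
    intro x _; positivity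
  have hδinv : (2:ℝ) ≤ δ⁻¹ := by
    rw [le_inv_comm₀] <;> [linarith; norm_num; exact hδ]
  have hsum : (∫ θ in (0:ℝ)..(2*π),
        (δ⁻¹ * (Real.sin θ ^ 2 * ‖h θ‖ ^ 2) + δ * ‖deriv h θ‖ ^ 2))
      = δ⁻¹ * (∫ θ in (0:ℝ)..(2*π), Real.sin θ ^ 2 * ‖h θ‖ ^ 2)
        + δ * ∫ θ in (0:ℝ)..(2*π), ‖deriv h θ‖ ^ 2 := by
    rw [intervalIntegral.integral_add (hA.const_mul _) (hB.const_mul _),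
      intervalIntegral.integral_const_mul, intervalIntegral.integral_const_mul]
  have h2A : (∫ θ in (0:ℝ)..(2*π), 2 * (Real.sin θ ^ 2 * ‖h θ‖ ^ 2))
      = 2 * ∫ θ in (0:ℝ)..(2*π), Real.sin θ ^ 2 * ‖h θ‖ ^ 2 :=
    intervalIntegral.integral_const_mul _ _
  rw [hsum] at hint
  rw [hsplit, h2A]
  nlinarith [mul_nonneg hδ.le hBpos]
end
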